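/- arXiv:2604.10241 — 4 statements merged into one kernel-verified Lean document; each statement's English description precedes it below -/
import Mathlib

section
/- (Existence and uniqueness of the SU-decomposition) Let Ξ ∈ ℝ^{6×3} with upper 3×3 block A and lower 3×3 block B, whose first column of A is nonzero and whose first two columns of A are linearly independent. Then there exist a unique pair (R, p) with R ∈ SO(3), p ∈ ℝ³, and a unique 6×3 matrix U = [U₁; U₂] with U₁, U₂ both 3×3 upper-triangular and (U₁)₁₁ > 0, (U₁)₂₂ > 0, such that A = R U₁ and B = [p]× R U₁ + R U₂. -/
open Matrix

/-- Cross product in ℝ³. -/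
def cross3 (a b : Fin 3 → ℝ) : Fin 3 → ℝ :=
  ![a 1 * b 2 - a 2 * b 1, a 2 * b 0 - a 0 * b 2, a 0 * b 1 - a 1 * b 0]

/-- Euclidean norm in ℝ³. -/
noncomputable def enorm3 (v : Fin 3 → ℝ) : ℝ := Real.sqrt (∑ i, v i ^ 2)

/-- Dot product in ℝ³. -/
def dot3 (a b : Fin 3 → ℝ) : ℝ := ∑ i, a i * b i

/-- Membership in SO(3). -/
def SO3 (R : Matrix (Fin 3) (Fin 3) ℝ) : Prop := Rᵀ * R = 1 ∧ R.det = 1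

/-- Skew-symmetric cross-product matrix [p]×. -/
def skew3 (p : Fin 3 → ℝ) : Matrix (Fin 3) (Fin 3) ℝ :=
  !![0, -p 2, p 1; p 2, 0, -p 0; -p 1, p 0, 0]

/-- The 6×6 screw-transformation matrix S(R,p) = [[R,0],[[p]×R,R]]. -/
def Scr (R : Matrix (Fin 3) (Fin 3) ℝ) (p : Fin 3 → ℝ) :
    Matrix (Fin 3 ⊕ Fin 3) (Fin 3 ⊕ Fin 3) ℝ :=
  Matrix.fromBlocks R 0 (skew3 p * R) R

/-- Upper-triangular 3×3 matrix. -/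
def UT3 (M : Matrix (Fin 3) (Fin 3) ℝ) : Prop :=
  ∀ i j : Fin 3, (j : ℕ) < (i : ℕ) → M i j = 0

set_option maxHeartbeats 4000000

lemma sumsq_zero {x y z : ℝ} (h : x^2 + y^2 + z^2 = 0) : x = 0 ∧ y = 0 ∧ z = 0 := by
  refine ⟨?_, ?_, ?_⟩
  · have hx : x^2 = 0 := by nlinarith [sq_nonneg y, sq_nonneg z]
    exact pow_eq_zero_iff (by norm_num) |>.mp hx
  · have hy : y^2 = 0 := by nlinarith [sq_nonneg x, sq_nonneg z]
    exact pow_eq_zero_iff (by norm_num) |>.mp hy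
  · have hz : z^2 = 0 := by nlinarith [sq_nonneg x, sq_nonneg y]
    exact pow_eq_zero_iff (by norm_num) |>.mp hz

lemma so3_col2 (R : Matrix (Fin 3) (Fin 3) ℝ) (h : SO3 R) (i : Fin 3) :
    R i 2 = cross3 (fun k => R k 0) (fun k => R k 1) i := by
  obtain ⟨h1, h2⟩ := h
  have e : ∀ j k : Fin 3, ∑ i, R i j * R i k = if j = k then 1 else 0 := fun j k => by
    simpa [Matrix.mul_apply, Matrix.one_apply] using congrFun (congrFun h1 j) k
  have e00 := e 0 0; have e11 := e 1 1; have e22 := e 2 2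
  have e01 := e 0 1
  simp [Fin.sum_univ_three] at e00 e11 e22 e01
  rw [Matrix.det_fin_three] at h2
  have key : (R 0 2 - (R 1 0 * R 2 1 - R 2 0 * R 1 1))^2
      + (R 1 2 - (R 2 0 * R 0 1 - R 0 0 * R 2 1))^2
      + (R 2 2 - (R 0 0 * R 1 1 - R 1 0 * R 0 1))^2 = 0 := by
    linear_combination e22 - 2*h2 + (R 0 1 * R 0 1 + R 1 1 * R 1 1 + R 2 1 * R 2 1) * e00
      + e11 - (R 0 0 * R 0 1 + R 1 0 * R 1 1 + R 2 0 * R 2 1) * e01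
  obtain ⟨k0, k1, k2⟩ := sumsq_zero key
  fin_cases i <;> simp [cross3, Fin.isValue] <;> linarith [k0, k1, k2]

theorem stmt5 (A B : Matrix (Fin 3) (Fin 3) ℝ)
    (h1 : (fun i => A i 0) ≠ 0)
    (h2 : cross3 (fun i => A i 0) (fun i => A i 1) ≠ 0) :
    ∃! x : (Matrix (Fin 3) (Fin 3) ℝ × (Fin 3 → ℝ)) ×
           (Matrix (Fin 3) (Fin 3) ℝ × Matrix (Fin 3) (Fin 3) ℝ),
      SO3 x.1.1 ∧ UT3 x.2.1 ∧ UT3 x.2.2 ∧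
      0 < x.2.1 0 0 ∧ 0 < x.2.1 1 1 ∧
      A = x.1.1 * x.2.1 ∧
      B = skew3 x.1.2 * x.1.1 * x.2.1 + x.1.1 * x.2.2 := by
  classical
  have hapos : 0 < ∑ i, A i 0 ^ 2 := by
    rcases Function.ne_iff.mp h1 with ⟨i, hi⟩
    simp only [Pi.zero_apply] at hi
    exact Finset.sum_pos' (fun j _ => sq_nonneg _) ⟨i, Finset.mem_univ i, by positivity⟩
  have hcpos : 0 < ∑ i, (cross3 (fun k => A k 0) (fun k => A k 1)) i ^ 2 := by
    rcases Function.ne_iff.mp h2 with ⟨i, hi⟩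
    simp only [Pi.zero_apply] at hi
    exact Finset.sum_pos' (fun j _ => sq_nonneg _) ⟨i, Finset.mem_univ i, by positivity⟩
  set na := enorm3 (fun i => A i 0) with hnadef
  set nc := enorm3 (cross3 (fun k => A k 0) (fun k => A k 1)) with hncdef
  have hna : 0 < na := by rw [hnadef, enorm3]; exact Real.sqrt_pos.mpr hapos
  have hnc : 0 < nc := by rw [hncdef, enorm3]; exact Real.sqrt_pos.mpr hcpos
  have hna2 : na ^ 2 = A 0 0 * A 0 0 + A 1 0 * A 1 0 + A 2 0 * A 2 0 := by
    rw [hnadef, enorm3, Real.sq_sqrt hapos.le, Fin.sum_univ_three]; ring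
  have hnc2 : nc ^ 2 = ((A 1 0 * A 2 1 - A 2 0 * A 1 1) * (A 1 0 * A 2 1 - A 2 0 * A 1 1) + (A 2 0 * A 0 1 - A 0 0 * A 2 1) * (A 2 0 * A 0 1 - A 0 0 * A 2 1) + (A 0 0 * A 1 1 - A 1 0 * A 0 1) * (A 0 0 * A 1 1 - A 1 0 * A 0 1)) := by
    rw [hncdef, enorm3, Real.sq_sqrt hcpos.le, Fin.sum_univ_three]
    simp [cross3]; ring
  have hsapos : 0 < (A 0 0 * A 0 0 + A 1 0 * A 1 0 + A 2 0 * A 2 0) := by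
    have h := hapos
    rw [Fin.sum_univ_three] at h
    calc (0:ℝ) < A 0 0 ^ 2 + A 1 0 ^ 2 + A 2 0 ^ 2 := h
    _ = (A 0 0 * A 0 0 + A 1 0 * A 1 0 + A 2 0 * A 2 0) := by ring
  have hscpos : 0 < ((A 1 0 * A 2 1 - A 2 0 * A 1 1) * (A 1 0 * A 2 1 - A 2 0 * A 1 1) + (A 2 0 * A 0 1 - A 0 0 * A 2 1) * (A 2 0 * A 0 1 - A 0 0 * A 2 1) + (A 0 0 * A 1 1 - A 1 0 * A 0 1) * (A 0 0 * A 1 1 - A 1 0 * A 0 1)) := by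
    have h := hcpos
    rw [Fin.sum_univ_three] at h
    simp only [cross3, Matrix.cons_val_zero, Matrix.cons_val_one, Matrix.head_cons,
      Matrix.cons_val_two, Matrix.tail_cons] at h
    calc (0:ℝ) < ((fun k => A k 0) 1 * (fun k => A k 1) 2 - (fun k => A k 0) 2 * (fun k => A k 1) 1) ^ 2
        + ((fun k => A k 0) 2 * (fun k => A k 1) 0 - (fun k => A k 0) 0 * (fun k => A k 1) 2) ^ 2
        + ((fun k => A k 0) 0 * (fun k => A k 1) 1 - (fun k => A k 0) 1 * (fun k => A k 1) 0) ^ 2 := h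
    _ = ((A 1 0 * A 2 1 - A 2 0 * A 1 1) * (A 1 0 * A 2 1 - A 2 0 * A 1 1) + (A 2 0 * A 0 1 - A 0 0 * A 2 1) * (A 2 0 * A 0 1 - A 0 0 * A 2 1) + (A 0 0 * A 1 1 - A 1 0 * A 0 1) * (A 0 0 * A 1 1 - A 1 0 * A 0 1)) := by ring
  have hsane : (A 0 0 * A 0 0 + A 1 0 * A 1 0 + A 2 0 * A 2 0) ≠ 0 := ne_of_gt hsapos
  have hscne : ((A 1 0 * A 2 1 - A 2 0 * A 1 1) * (A 1 0 * A 2 1 - A 2 0 * A 1 1) + (A 2 0 * A 0 1 - A 0 0 * A 2 1) * (A 2 0 * A 0 1 - A 0 0 * A 2 1) + (A 0 0 * A 1 1 - A 1 0 * A 0 1) * (A 0 0 * A 1 1 - A 1 0 * A 0 1)) ≠ 0 := ne_of_gt hscpos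
  set R0 : Matrix (Fin 3) (Fin 3) ℝ := Matrix.of (fun i j =>
    ![A i 0 / na,
      (cross3 (cross3 (fun k => A k 0) (fun k => A k 1)) (fun k => A k 0)) i / (nc * na),
      (cross3 (fun k => A k 0) (fun k => A k 1)) i / nc] j) with hR0def
  set p0 : Fin 3 → ℝ := ![(((A 0 0 * A 0 0 + A 1 0 * A 1 0 + A 2 0 * A 2 0) * ((A 1 0 * A 2 1 - A 2 0 * A 1 1) * B 0 1 + (A 2 0 * A 0 1 - A 0 0 * A 2 1) * B 1 1 + (A 0 0 * A 1 1 - A 1 0 * A 0 1) * B 2 1) - (A 0 0 * A 0 1 + A 1 0 * A 1 1 + A 2 0 * A 2 1) * ((A 1 0 * A 2 1 - A 2 0 * A 1 1) * B 0 0 + (A 2 0 * A 0 1 - A 0 0 * A 2 1) * B 1 0 + (A 0 0 * A 1 1 - A 1 0 * A 0 1) * B 2 0)) * A 0 0 - ((A 1 0 * A 2 1 - A 2 0 * A 1 1) * B 0 0 + (A 2 0 * A 0 1 - A 0 0 * A 2 1) * B 1 0 + (A 0 0 * A 1 1 - A 1 0 * A 0 1) * B 2 0) * ((A 2 0 * A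 0 1 - A 0 0 * A 2 1) * A 2 0 - (A 0 0 * A 1 1 - A 1 0 * A 0 1) * A 1 0) + (((A 2 0 * A 0 1 - A 0 0 * A 2 1) * A 2 0 - (A 0 0 * A 1 1 - A 1 0 * A 0 1) * A 1 0) * B 0 0 + ((A 0 0 * A 1 1 - A 1 0 * A 0 1) * A 0 0 - (A 1 0 * A 2 1 - A 2 0 * A 1 1) * A 2 0) * B 1 0 + ((A 1 0 * A 2 1 - A 2 0 * A 1 1) * A 1 0 - (A 2 0 * A 0 1 - A 0 0 * A 2 1) * A 0 0) * B 2 0) * (A 1 0 * A 2 1 - A 2 0 * A 1 1)) / ((A 0 0 * A 0 0 + A 1 0 * A 1 0 + A 2 0 * A 2 0) * ((A 1 0 * A 2 1 - A 2 0 * A 1 1) * (A 1 0 * A 2 1 - A 2 0 * A 1 1) + (A 2 0 * A 0 1 - A 0 0 * A 2 1) * (A 2 0 * A 0 1 - A 0 0 * A 2 1) + (A 0 0 * A 1 1 - A 1 0 * A 0 1) * (A 0 0 * A 1 1 - A 1 0 * A 0 1))),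
    (((A 0 0 * A 0 0 + A 1 0 * A 1 0 + A 2 0 * A 2 0) * ((A 1 0 * A 2 1 - A 2 0 * A 1 1) * B 0 1 + (A 2 0 * A 0 1 - A 0 0 * A 2 1) * B 1 1 + (A 0 0 * A 1 1 - A 1 0 * A 0 1) * B 2 1) - (A 0 0 * A 0 1 + A 1 0 * A 1 1 + A 2 0 * A 2 1) * ((A 1 0 * A 2 1 - A 2 0 * A 1 1) * B 0 0 + (A 2 0 * A 0 1 - A 0 0 * A 2 1) * B 1 0 + (A 0 0 * A 1 1 - A 1 0 * A 0 1) * B 2 0)) * A 1 0 - ((A 1 0 * A 2 1 - A 2 0 * A 1 1) * B 0 0 + (A 2 0 * A 0 1 - A 0 0 * A 2 1) * B 1 0 + (A 0 0 * A 1 1 - A 1 0 * A 0 1) * B 2 0) * ((A 0 0 * A 1 1 - A 1 0 * A 0 1) * A 0 0 - (A 1 0 * A 2 1 - A 2 0 * A 1 1) * A 2 0) + (((A 2 0 * A 0 1 - A 0 0 * A 2 1) * A 2 0 - (A 0 0 * A 1 1 - A 1 0 * A 0 1) * A 1 0) * B 0 0 + ((A 0 0 * A 1 1 - A 1 0 *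 A 0 1) * A 0 0 - (A 1 0 * A 2 1 - A 2 0 * A 1 1) * A 2 0) * B 1 0 + ((A 1 0 * A 2 1 - A 2 0 * A 1 1) * A 1 0 - (A 2 0 * A 0 1 - A 0 0 * A 2 1) * A 0 0) * B 2 0) * (A 2 0 * A 0 1 - A 0 0 * A 2 1)) / ((A 0 0 * A 0 0 + A 1 0 * A 1 0 + A 2 0 * A 2 0) * ((A 1 0 * A 2 1 - A 2 0 * A 1 1) * (A 1 0 * A 2 1 - A 2 0 * A 1 1) + (A 2 0 * A 0 1 - A 0 0 * A 2 1) * (A 2 0 * A 0 1 - A 0 0 * A 2 1) + (A 0 0 * A 1 1 - A 1 0 * A 0 1) * (A 0 0 * A 1 1 - A 1 0 * A 0 1))),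
    (((A 0 0 * A 0 0 + A 1 0 * A 1 0 + A 2 0 * A 2 0) * ((A 1 0 * A 2 1 - A 2 0 * A 1 1) * B 0 1 + (A 2 0 * A 0 1 - A 0 0 * A 2 1) * B 1 1 + (A 0 0 * A 1 1 - A 1 0 * A 0 1) * B 2 1) - (A 0 0 * A 0 1 + A 1 0 * A 1 1 + A 2 0 * A 2 1) * ((A 1 0 * A 2 1 - A 2 0 * A 1 1) * B 0 0 + (A 2 0 * A 0 1 - A 0 0 * A 2 1) * B 1 0 + (A 0 0 * A 1 1 - A 1 0 * A 0 1) * B 2 0)) * A 2 0 - ((A 1 0 * A 2 1 - A 2 0 * A 1 1) * B 0 0 + (A 2 0 * A 0 1 - A 0 0 * A 2 1) * B 1 0 + (A 0 0 * A 1 1 - A 1 0 * A 0 1) * B 2 0) * ((A 1 0 * A 2 1 - A 2 0 * A 1 1) * A 1 0 - (A 2 0 * A 0 1 - A 0 0 * A 2 1) * A 0 0) + (((A 2 0 * A 0 1 - A 0 0 * A 2 1) * A 2 0 - (A 0 0 * A 1 1 - A 1 0 * A 0 1) * A 1 0) * B 0 0 + ((A 0 0 * A 1 1 - A 1 0 *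 A 0 1) * A 0 0 - (A 1 0 * A 2 1 - A 2 0 * A 1 1) * A 2 0) * B 1 0 + ((A 1 0 * A 2 1 - A 2 0 * A 1 1) * A 1 0 - (A 2 0 * A 0 1 - A 0 0 * A 2 1) * A 0 0) * B 2 0) * (A 0 0 * A 1 1 - A 1 0 * A 0 1)) / ((A 0 0 * A 0 0 + A 1 0 * A 1 0 + A 2 0 * A 2 0) * ((A 1 0 * A 2 1 - A 2 0 * A 1 1) * (A 1 0 * A 2 1 - A 2 0 * A 1 1) + (A 2 0 * A 0 1 - A 0 0 * A 2 1) * (A 2 0 * A 0 1 - A 0 0 * A 2 1) + (A 0 0 * A 1 1 - A 1 0 * A 0 1) * (A 0 0 * A 1 1 - A 1 0 * A 0 1)))] with hp0def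
  set U1 : Matrix (Fin 3) (Fin 3) ℝ := R0ᵀ * A with hU1def
  set U2 : Matrix (Fin 3) (Fin 3) ℝ := R0ᵀ * (B - skew3 p0 * A) with hU2def
  have hna' : na ≠ 0 := hna.ne'
  have hnc' : nc ≠ 0 := hnc.ne'
  have hSO : SO3 R0 := by
    constructor
    · ext i j
      fin_cases i <;> fin_cases j <;>
        simp [hR0def, Matrix.mul_apply, Matrix.one_apply, Fin.sum_univ_three, cross3] <;>
        field_simp <;>
        first
          | ring1
          | linear_combination hna2
          | linear_combination (-1 : ℝ) * hna2
          | linear_combination hnc2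
          | linear_combination (-1 : ℝ) * hnc2
          | linear_combination (-(((A 1 0 * A 2 1 - A 2 0 * A 1 1) * (A 1 0 * A 2 1 - A 2 0 * A 1 1) + (A 2 0 * A 0 1 - A 0 0 * A 2 1) * (A 2 0 * A 0 1 - A 0 0 * A 2 1) + (A 0 0 * A 1 1 - A 1 0 * A 0 1) * (A 0 0 * A 1 1 - A 1 0 * A 0 1)))) * hna2 - na^2 * hnc2
          | linear_combination (((A 1 0 * A 2 1 - A 2 0 * A 1 1) * (A 1 0 * A 2 1 - A 2 0 * A 1 1) + (A 2 0 * A 0 1 - A 0 0 * A 2 1) * (A 2 0 * A 0 1 - A 0 0 * A 2 1) + (A 0 0 * A 1 1 - A 1 0 * A 0 1) * (A 0 0 * A 1 1 - A 1 0 * A 0 1))) * hna2 + na^2 * hnc2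
    · rw [Matrix.det_fin_three]
      simp only [hR0def, Matrix.of_apply, Matrix.cons_val_zero, Matrix.cons_val_one,
        Matrix.head_cons, Matrix.cons_val_two, Matrix.tail_cons, cross3]
      calc _ = ((A 0 0 * A 0 0 + A 1 0 * A 1 0 + A 2 0 * A 2 0) * ((A 1 0 * A 2 1 - A 2 0 * A 1 1) * (A 1 0 * A 2 1 - A 2 0 * A 1 1) + (A 2 0 * A 0 1 - A 0 0 * A 2 1) * (A 2 0 * A 0 1 - A 0 0 * A 2 1) + (A 0 0 * A 1 1 - A 1 0 * A 0 1) * (A 0 0 * A 1 1 - A 1 0 * A 0 1))) / (na^2*nc^2) := by ring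
      _ = 1 := by rw [← hna2, ← hnc2]; exact div_self (by positivity)
  have hR0R0 : R0 * R0ᵀ = 1 := mul_eq_one_comm.mp hSO.1
  have HQ1 : (((A 2 0 * A 0 1 - A 0 0 * A 2 1) * A 2 0 - (A 0 0 * A 1 1 - A 1 0 * A 0 1) * A 1 0) * B 0 0 + ((A 0 0 * A 1 1 - A 1 0 * A 0 1) * A 0 0 - (A 1 0 * A 2 1 - A 2 0 * A 1 1) * A 2 0) * B 1 0 + ((A 1 0 * A 2 1 - A 2 0 * A 1 1) * A 1 0 - (A 2 0 * A 0 1 - A 0 0 * A 2 1) * A 0 0) * B 2 0) - (((A 2 0 * A 0 1 - A 0 0 * A 2 1) * A 2 0 - (A 0 0 * A 1 1 - A 1 0 * A 0 1) * A 1 0) * (p0 1 * A 2 0 - p0 2 * A 1 0) + ((A 0 0 * A 1 1 - A 1 0 * A 0 1) * A 0 0 - (A 1 0 * A 2 1 - A 2 0 * A 1 1) * A 2 0) * (p0 2 * A 0 0 - p0 0 * A 2 0) + ((A 1 0 * A 2 1 - A 2 0 * A 1 1) * A 1 0 - (A 2 0 * A 0 1 - A 0 0 * A 2 1) * A 0 0)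 * (p0 0 * A 1 0 - p0 1 * A 0 0)) = 0 := by
    simp only [hp0def, Matrix.cons_val_zero, Matrix.cons_val_one, Matrix.head_cons,
      Matrix.cons_val_two, Matrix.tail_cons]
    linear_combination (-(((A 2 0 * A 0 1 - A 0 0 * A 2 1) * A 2 0 - (A 0 0 * A 1 1 - A 1 0 * A 0 1) * A 1 0) * B 0 0 + ((A 0 0 * A 1 1 - A 1 0 * A 0 1) * A 0 0 - (A 1 0 * A 2 1 - A 2 0 * A 1 1) * A 2 0) * B 1 0 + ((A 1 0 * A 2 1 - A 2 0 * A 1 1) * A 1 0 - (A 2 0 * A 0 1 - A 0 0 * A 2 1) * A 0 0) * B 2 0)) * mul_inv_cancel₀ (mul_ne_zero hsane hscne)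
  have HQ2 : ((A 1 0 * A 2 1 - A 2 0 * A 1 1) * B 0 0 + (A 2 0 * A 0 1 - A 0 0 * A 2 1) * B 1 0 + (A 0 0 * A 1 1 - A 1 0 * A 0 1) * B 2 0) - ((A 1 0 * A 2 1 - A 2 0 * A 1 1) * (p0 1 * A 2 0 - p0 2 * A 1 0) + (A 2 0 * A 0 1 - A 0 0 * A 2 1) * (p0 2 * A 0 0 - p0 0 * A 2 0) + (A 0 0 * A 1 1 - A 1 0 * A 0 1) * (p0 0 * A 1 0 - p0 1 * A 0 0)) = 0 := by
    simp only [hp0def, Matrix.cons_val_zero, Matrix.cons_val_one, Matrix.head_cons,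
      Matrix.cons_val_two, Matrix.tail_cons]
    linear_combination (-((A 1 0 * A 2 1 - A 2 0 * A 1 1) * B 0 0 + (A 2 0 * A 0 1 - A 0 0 * A 2 1) * B 1 0 + (A 0 0 * A 1 1 - A 1 0 * A 0 1) * B 2 0)) * mul_inv_cancel₀ (mul_ne_zero hsane hscne)
  have HQ3 : ((A 1 0 * A 2 1 - A 2 0 * A 1 1) * B 0 1 + (A 2 0 * A 0 1 - A 0 0 * A 2 1) * B 1 1 + (A 0 0 * A 1 1 - A 1 0 * A 0 1) * B 2 1) - ((A 1 0 * A 2 1 - A 2 0 * A 1 1) * (p0 1 * A 2 1 - p0 2 * A 1 1) + (A 2 0 * A 0 1 - A 0 0 * A 2 1) * (p0 2 * A 0 1 - p0 0 * A 2 1) + (A 0 0 * A 1 1 - A 1 0 * A 0 1) * (p0 0 * A 1 1 - p0 1 * A 0 1)) = 0 := by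
    simp only [hp0def, Matrix.cons_val_zero, Matrix.cons_val_one, Matrix.head_cons,
      Matrix.cons_val_two, Matrix.tail_cons]
    linear_combination (-((A 1 0 * A 2 1 - A 2 0 * A 1 1) * B 0 1 + (A 2 0 * A 0 1 - A 0 0 * A 2 1) * B 1 1 + (A 0 0 * A 1 1 - A 1 0 * A 0 1) * B 2 1)) * mul_inv_cancel₀ (mul_ne_zero hsane hscne)
  have t10 : U1 1 0 = 0 := by
    simp [hU1def, hR0def, Matrix.mul_apply, Matrix.transpose_apply, Fin.sum_univ_three, cross3]
    field_simp
    ring1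
  have t20 : U1 2 0 = 0 := by
    simp [hU1def, hR0def, Matrix.mul_apply, Matrix.transpose_apply, Fin.sum_univ_three, cross3]
    field_simp
    ring1
  have t21 : U1 2 1 = 0 := by
    simp [hU1def, hR0def, Matrix.mul_apply, Matrix.transpose_apply, Fin.sum_univ_three, cross3]
    field_simp
    ring1
  have hUT1 : UT3 U1 := by
    intro i j hij
    fin_cases i <;> fin_cases j <;> simp at hij ⊢ <;>
      first | exact t10 | exact t20 | exact t21
  have h00 : U1 0 0 = na := by
    simp [hU1def, hR0def, Matrix.mul_apply, Matrix.transpose_apply, Fin.sum_univ_three]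
    field_simp
    linear_combination -hna2
  have h11 : U1 1 1 = nc / na := by
    simp [hU1def, hR0def, Matrix.mul_apply, Matrix.transpose_apply, Fin.sum_univ_three, cross3]
    field_simp
    linear_combination (-1 : ℝ) * hnc2
  have hpos00 : 0 < U1 0 0 := by rw [h00]; exact hna
  have hpos11 : 0 < U1 1 1 := by rw [h11]; positivity
  have hAeq : A = R0 * U1 := by
    rw [hU1def, ← Matrix.mul_assoc, hR0R0, Matrix.one_mul]
  have s10 : U2 1 0 = 0 := by
    simp [hU2def, hR0def, Matrix.mul_apply, Matrix.transpose_apply, Matrix.sub_apply,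
      skew3, Fin.sum_univ_three, cross3, Matrix.vecMul, dotProduct]
    field_simp
    linear_combination HQ1
  have s20 : U2 2 0 = 0 := by
    simp [hU2def, hR0def, Matrix.mul_apply, Matrix.transpose_apply, Matrix.sub_apply,
      skew3, Fin.sum_univ_three, cross3, Matrix.vecMul, dotProduct]
    field_simp
    linear_combination HQ2
  have s21 : U2 2 1 = 0 := by
    simp [hU2def, hR0def, Matrix.mul_apply, Matrix.transpose_apply, Matrix.sub_apply,
      skew3, Fin.sum_univ_three, cross3, Matrix.vecMul, dotProduct]
    field_simp
    linear_combination HQ3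
  have hUT2 : UT3 U2 := by
    intro i j hij
    fin_cases i <;> fin_cases j <;> simp at hij ⊢ <;>
      first | exact s10 | exact s20 | exact s21
  have hBeq : B = skew3 p0 * R0 * U1 + R0 * U2 := by
    have hx : R0 * U2 = B - skew3 p0 * A := by
      rw [hU2def, ← Matrix.mul_assoc, hR0R0, Matrix.one_mul]
    have hy : skew3 p0 * R0 * U1 = skew3 p0 * A := by
      rw [Matrix.mul_assoc, ← hAeq]
    rw [hx, hy]
    abel
  refine ⟨⟨⟨R0, p0⟩, ⟨U1, U2⟩⟩, ⟨hSO, hUT1, hUT2, hpos00, hpos11, hAeq, hBeq⟩, ?_⟩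
  rintro ⟨⟨R, p⟩, V1, V2⟩ ⟨hSO', hUT1', hUT2', hq00, hq11, hA', hB'⟩
  have e : ∀ j k : Fin 3, ∑ i, R i j * R i k = if j = k then 1 else 0 := fun j k => by
    simpa [Matrix.mul_apply, Matrix.one_apply] using congrFun (congrFun hSO'.1 j) k
  have e00 := e 0 0; have e01 := e 0 1; have e11 := e 1 1
  simp [Fin.sum_univ_three] at e00 e01 e11
  have z10 := hUT1' 1 0 (by norm_num)
  have z20 := hUT1' 2 0 (by norm_num)
  have z21 := hUT1' 2 1 (by norm_num)
  have ha' : ∀ i, A i 0 = R i 0 * V1 0 0 := fun i => by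
    have h := congrFun (congrFun hA' i) 0
    simp [Matrix.mul_apply, Fin.sum_univ_three] at h
    linear_combination h + (R i 1) * z10 + (R i 2) * z20
  have hb' : ∀ i, A i 1 = R i 0 * V1 0 1 + R i 1 * V1 1 1 := fun i => by
    have h := congrFun (congrFun hA' i) 1
    simp [Matrix.mul_apply, Fin.sum_univ_three] at h
    linear_combination h + (R i 2) * z21
  have hu0sq : (V1 0 0 - na) * (V1 0 0 + na) = 0 := by
    have hg : V1 0 0 ^ 2 = na ^ 2 := by
      rw [hna2, ha' 0, ha' 1, ha' 2]
      linear_combination (-(V1 0 0 ^ 2)) * e00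
    linear_combination hg
  have hu0 : V1 0 0 = na := by
    rcases mul_eq_zero.mp hu0sq with h | h
    · exact sub_eq_zero.mp h
    · exfalso; linarith
  have hX : ∀ i, R i 0 * na = A i 0 := fun i => by
    linear_combination -(ha' i) - (R i 0) * hu0
  have hs1 : R 0 0 * A 0 1 + R 1 0 * A 1 1 + R 2 0 * A 2 1 = V1 0 1 := by
    rw [hb' 0, hb' 1, hb' 2]
    linear_combination (V1 0 1) * e00 + (V1 1 1) * e01
  have hu1na : V1 0 1 * na = (A 0 0 * A 0 1 + A 1 0 * A 1 1 + A 2 0 * A 2 1) := by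
    rw [← hs1]
    linear_combination (A 0 1) * hX 0 + (A 1 1) * hX 1 + (A 2 1) * hX 2
  have hb2 : A 0 1 * A 0 1 + A 1 1 * A 1 1 + A 2 1 * A 2 1
      = V1 0 1 * V1 0 1 + V1 1 1 * V1 1 1 := by
    rw [hb' 0, hb' 1, hb' 2]
    linear_combination (V1 0 1 * V1 0 1) * e00 + (2 * V1 0 1 * V1 1 1) * e01
      + (V1 1 1 * V1 1 1) * e11
  have hu2sq : (V1 1 1 * na - nc) * (V1 1 1 * na + nc) = 0 := by
    linear_combination ((A 0 1 * A 0 1 + A 1 1 * A 1 1 + A 2 1 * A 2 1)) * hna2 - (V1 0 1 * na + (A 0 0 * A 0 1 + A 1 0 * A 1 1 + A 2 0 * A 2 1)) * hu1na - na^2 * hb2 - hnc2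
  have hu2 : V1 1 1 * na = nc := by
    rcases mul_eq_zero.mp hu2sq with h | h
    · exact sub_eq_zero.mp h
    · exfalso
      have hm : 0 < V1 1 1 * na := mul_pos hq11 hna
      linarith
  have hR1_0 : R 0 1 * (nc * na) = ((A 2 0 * A 0 1 - A 0 0 * A 2 1) * A 2 0 - (A 0 0 * A 1 1 - A 1 0 * A 0 1) * A 1 0) := by
    linear_combination (A 0 1) * hna2 + ((A 0 0 * A 0 1 + A 1 0 * A 1 1 + A 2 0 * A 2 1)) * (ha' 0) + (((A 0 0 * A 0 1 + A 1 0 * A 1 1 + A 2 0 * A 2 1)) * R 0 0) * hu0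
      - (R 0 0 * na) * hu1na - na^2 * (hb' 0) - (R 0 1 * na) * hu2
  have hR1_1 : R 1 1 * (nc * na) = ((A 0 0 * A 1 1 - A 1 0 * A 0 1) * A 0 0 - (A 1 0 * A 2 1 - A 2 0 * A 1 1) * A 2 0) := by
    linear_combination (A 1 1) * hna2 + ((A 0 0 * A 0 1 + A 1 0 * A 1 1 + A 2 0 * A 2 1)) * (ha' 1) + (((A 0 0 * A 0 1 + A 1 0 * A 1 1 + A 2 0 * A 2 1)) * R 1 0) * hu0
      - (R 1 0 * na) * hu1na - na^2 * (hb' 1) - (R 1 1 * na) * hu2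
  have hR1_2 : R 2 1 * (nc * na) = ((A 1 0 * A 2 1 - A 2 0 * A 1 1) * A 1 0 - (A 2 0 * A 0 1 - A 0 0 * A 2 1) * A 0 0) := by
    linear_combination (A 2 1) * hna2 + ((A 0 0 * A 0 1 + A 1 0 * A 1 1 + A 2 0 * A 2 1)) * (ha' 2) + (((A 0 0 * A 0 1 + A 1 0 * A 1 1 + A 2 0 * A 2 1)) * R 2 0) * hu0
      - (R 2 0 * na) * hu1na - na^2 * (hb' 2) - (R 2 1 * na) * hu2
  have hXc0 : R 0 2 = R 1 0 * R 2 1 - R 2 0 * R 1 1 := by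
    simpa [cross3] using so3_col2 R hSO' 0
  have hXc1 : R 1 2 = R 2 0 * R 0 1 - R 0 0 * R 2 1 := by
    simpa [cross3] using so3_col2 R hSO' 1
  have hXc2 : R 2 2 = R 0 0 * R 1 1 - R 1 0 * R 0 1 := by
    simpa [cross3] using so3_col2 R hSO' 2
  have hna2ne : na ^ 2 ≠ 0 := pow_ne_zero 2 hna'
  have hR2c0 : R 0 2 * nc = (A 1 0 * A 2 1 - A 2 0 * A 1 1) := by
    have hh : (R 0 2 * nc - ((A 1 0 * A 2 1 - A 2 0 * A 1 1))) * na ^ 2 = 0 := by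
      linear_combination (nc * na^2) * hXc0 + (R 1 0 * na) * hR1_2 + (((A 1 0 * A 2 1 - A 2 0 * A 1 1) * A 1 0 - (A 2 0 * A 0 1 - A 0 0 * A 2 1) * A 0 0)) * hX 1
        - (R 2 0 * na) * hR1_1 - (((A 0 0 * A 1 1 - A 1 0 * A 0 1) * A 0 0 - (A 1 0 * A 2 1 - A 2 0 * A 1 1) * A 2 0)) * hX 2 - ((A 1 0 * A 2 1 - A 2 0 * A 1 1)) * hna2
    have h' := (mul_eq_zero.mp hh).resolve_right hna2ne
    linarith [h']
  have hR2c1 : R 1 2 * nc = (A 2 0 * A 0 1 - A 0 0 * A 2 1) := by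
    have hh : (R 1 2 * nc - ((A 2 0 * A 0 1 - A 0 0 * A 2 1))) * na ^ 2 = 0 := by
      linear_combination (nc * na^2) * hXc1 + (R 2 0 * na) * hR1_0 + (((A 2 0 * A 0 1 - A 0 0 * A 2 1) * A 2 0 - (A 0 0 * A 1 1 - A 1 0 * A 0 1) * A 1 0)) * hX 2
        - (R 0 0 * na) * hR1_2 - (((A 1 0 * A 2 1 - A 2 0 * A 1 1) * A 1 0 - (A 2 0 * A 0 1 - A 0 0 * A 2 1) * A 0 0)) * hX 0 - ((A 2 0 * A 0 1 - A 0 0 * A 2 1)) * hna2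
    have h' := (mul_eq_zero.mp hh).resolve_right hna2ne
    linarith [h']
  have hR2c2 : R 2 2 * nc = (A 0 0 * A 1 1 - A 1 0 * A 0 1) := by
    have hh : (R 2 2 * nc - ((A 0 0 * A 1 1 - A 1 0 * A 0 1))) * na ^ 2 = 0 := by
      linear_combination (nc * na^2) * hXc2 + (R 0 0 * na) * hR1_1 + (((A 0 0 * A 1 1 - A 1 0 * A 0 1) * A 0 0 - (A 1 0 * A 2 1 - A 2 0 * A 1 1) * A 2 0)) * hX 0
        - (R 1 0 * na) * hR1_0 - (((A 2 0 * A 0 1 - A 0 0 * A 2 1) * A 2 0 - (A 0 0 * A 1 1 - A 1 0 * A 0 1) * A 1 0)) * hX 1 - ((A 0 0 * A 1 1 - A 1 0 * A 0 1)) * hna2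
    have h' := (mul_eq_zero.mp hh).resolve_right hna2ne
    linarith [h']
  have hReq : R = R0 := by
    ext i j
    fin_cases i <;> fin_cases j <;> simp [hR0def, cross3] <;>
      (first
        | rw [eq_div_iff hna'] | rw [eq_div_iff (mul_ne_zero hnc' hna')]
        | rw [eq_div_iff hnc']) <;>
      first
        | linear_combination hX 0 | linear_combination hX 1 | linear_combination hX 2
        | linear_combination hR1_0 | linear_combination hR1_1 | linear_combination hR1_2
        | linear_combination hR2c0 | linear_combination hR2c1 | linear_combination hR2c2
  have hV1 : V1 = U1 := by
    calc V1 = (R0ᵀ * R0) * V1 := by rw [hSO.1, Matrix.one_mul]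
    _ = R0ᵀ * (R0 * V1) := Matrix.mul_assoc _ _ _
    _ = R0ᵀ * A := by rw [← hReq, ← hA']
    _ = U1 := hU1def.symm
  have hRV2 : R0 * V2 = B - skew3 p * A := by
    rw [← hReq, hB', Matrix.mul_assoc, ← hA']
    exact (add_sub_cancel_left _ _).symm
  have hV2eq : V2 = R0ᵀ * (B - skew3 p * A) := by
    calc V2 = (R0ᵀ * R0) * V2 := by rw [hSO.1, Matrix.one_mul]
    _ = R0ᵀ * (R0 * V2) := Matrix.mul_assoc _ _ _
    _ = R0ᵀ * (B - skew3 p * A) := by rw [hRV2]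
  have w10 : (R0ᵀ * (B - skew3 p * A)) 1 0 = 0 := by
    rw [← hV2eq]; exact hUT2' 1 0 (by norm_num)
  have w20 : (R0ᵀ * (B - skew3 p * A)) 2 0 = 0 := by
    rw [← hV2eq]; exact hUT2' 2 0 (by norm_num)
  have w21 : (R0ᵀ * (B - skew3 p * A)) 2 1 = 0 := by
    rw [← hV2eq]; exact hUT2' 2 1 (by norm_num)
  have HP1 : (((A 2 0 * A 0 1 - A 0 0 * A 2 1) * A 2 0 - (A 0 0 * A 1 1 - A 1 0 * A 0 1) * A 1 0) * B 0 0 + ((A 0 0 * A 1 1 - A 1 0 * A 0 1) * A 0 0 - (A 1 0 * A 2 1 - A 2 0 * A 1 1) * A 2 0) * B 1 0 + ((A 1 0 * A 2 1 - A 2 0 * A 1 1) * A 1 0 - (A 2 0 * A 0 1 - A 0 0 * A 2 1) * A 0 0) * B 2 0) - (((A 2 0 * A 0 1 - A 0 0 * A 2 1) * A 2 0 - (A 0 0 * A 1 1 - A 1 0 * A 0 1) * A 1 0) * (p 1 * A 2 0 - p 2 * A 1 0) + ((A 0 0 * A 1 1 - A 1 0 * A 0 1) * A 0 0 - (A 1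 0 * A 2 1 - A 2 0 * A 1 1) * A 2 0) * (p 2 * A 0 0 - p 0 * A 2 0) + ((A 1 0 * A 2 1 - A 2 0 * A 1 1) * A 1 0 - (A 2 0 * A 0 1 - A 0 0 * A 2 1) * A 0 0) * (p 0 * A 1 0 - p 1 * A 0 0)) = 0 := by
    have h := w10
    simp [hR0def, Matrix.mul_apply, Matrix.transpose_apply, Matrix.sub_apply, skew3,
      Fin.sum_univ_three, cross3, Matrix.vecMul, dotProduct] at h
    field_simp at h
    first | linear_combination h | linear_combination -h
  have HP2 : ((A 1 0 * A 2 1 - A 2 0 * A 1 1) * B 0 0 + (A 2 0 * A 0 1 - A 0 0 * A 2 1) * B 1 0 + (A 0 0 * A 1 1 - A 1 0 * A 0 1) * B 2 0) - ((A 1 0 * A 2 1 - A 2 0 * A 1 1) * (p 1 * A 2 0 - p 2 * A 1 0) + (A 2 0 * A 0 1 - A 0 0 * A 2 1) * (p 2 * A 0 0 - p 0 * A 2 0) + (A 0 0 * A 1 1 - A 1 0 * A 0 1) * (p 0 * A 1 0 - p 1 * A 0 0)) = 0 := by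
    have h := w20
    simp [hR0def, Matrix.mul_apply, Matrix.transpose_apply, Matrix.sub_apply, skew3,
      Fin.sum_univ_three, cross3, Matrix.vecMul, dotProduct] at h
    field_simp at h
    first | linear_combination h | linear_combination -h
  have HP3 : ((A 1 0 * A 2 1 - A 2 0 * A 1 1) * B 0 1 + (A 2 0 * A 0 1 - A 0 0 * A 2 1) * B 1 1 + (A 0 0 * A 1 1 - A 1 0 * A 0 1) * B 2 1) - ((A 1 0 * A 2 1 - A 2 0 * A 1 1) * (p 1 * A 2 1 - p 2 * A 1 1) + (A 2 0 * A 0 1 - A 0 0 * A 2 1) * (p 2 * A 0 1 - p 0 * A 2 1) + (A 0 0 * A 1 1 - A 1 0 * A 0 1) * (p 0 * A 1 1 - p 1 * A 0 1)) = 0 := by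
    have h := w21
    simp [hR0def, Matrix.mul_apply, Matrix.transpose_apply, Matrix.sub_apply, skew3,
      Fin.sum_univ_three, cross3, Matrix.vecMul, dotProduct] at h
    field_simp at h
    first | linear_combination h | linear_combination -h
  have hTne : (((A 0 0 * A 0 0 + A 1 0 * A 1 0 + A 2 0 * A 2 0)) * (((A 1 0 * A 2 1 - A 2 0 * A 1 1) * (A 1 0 * A 2 1 - A 2 0 * A 1 1) + (A 2 0 * A 0 1 - A 0 0 * A 2 1) * (A 2 0 * A 0 1 - A 0 0 * A 2 1) + (A 0 0 * A 1 1 - A 1 0 * A 0 1) * (A 0 0 * A 1 1 - A 1 0 * A 0 1)))^2) ≠ 0 := ne_of_gt (mul_pos hsapos (pow_pos hscpos 2))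
  have hp1eq : p 0 = p0 0 := by
    have aux : (p 0 - p0 0) * (((A 0 0 * A 0 0 + A 1 0 * A 1 0 + A 2 0 * A 2 0)) * (((A 1 0 * A 2 1 - A 2 0 * A 1 1) * (A 1 0 * A 2 1 - A 2 0 * A 1 1) + (A 2 0 * A 0 1 - A 0 0 * A 2 1) * (A 2 0 * A 0 1 - A 0 0 * A 2 1) + (A 0 0 * A 1 1 - A 1 0 * A 0 1) * (A 0 0 * A 1 1 - A 1 0 * A 0 1)))^2) = 0 := by
      linear_combination ((((A 1 0 * A 2 1 - A 2 0 * A 1 1) * (A 1 0 * A 2 1 - A 2 0 * A 1 1) + (A 2 0 * A 0 1 - A 0 0 * A 2 1) * (A 2 0 * A 0 1 - A 0 0 * A 2 1) + (A 0 0 * A 1 1 - A 1 0 * A 0 1) * (A 0 0 * A 1 1 - A 1 0 * A 0 1)) * (A 1 0 * A 2 1 - A 2 0 * A 1 1))) * HQ1 - ((((A 1 0 * A 2 1 - A 2 0 * A 1 1) * (A 1 0 * A 2 1 - A 2 0 * A 1 1) + (A 2 0 * A 0 1 - A 0 0 * A 2 1) * (A 2 0 * A 0 1 - A 0 0 * A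 2 1) + (A 0 0 * A 1 1 - A 1 0 * A 0 1) * (A 0 0 * A 1 1 - A 1 0 * A 0 1)) * (A 1 0 * A 2 1 - A 2 0 * A 1 1))) * HP1 + (((A 0 0 * A 0 0 + A 1 0 * A 1 0 + A 2 0 * A 2 0) * (-(A 0 1 * A 0 1 + A 1 1 * A 1 1 + A 2 1 * A 2 1) * ((A 2 0 * A 0 1 - A 0 0 * A 2 1) * A 2 0 - (A 0 0 * A 1 1 - A 1 0 * A 0 1) * A 1 0) - (A 0 0 * A 0 1 + A 1 0 * A 1 1 + A 2 0 * A 2 1) * ((A 0 1 * A 0 1 + A 1 1 * A 1 1 + A 2 1 * A 2 1) * A 0 0 - (A 0 0 * A 0 1 + A 1 0 * A 1 1 + A 2 0 * A 2 1) * A 0 1)))) * HQ2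
        - (((A 0 0 * A 0 0 + A 1 0 * A 1 0 + A 2 0 * A 2 0) * (-(A 0 1 * A 0 1 + A 1 1 * A 1 1 + A 2 1 * A 2 1) * ((A 2 0 * A 0 1 - A 0 0 * A 2 1) * A 2 0 - (A 0 0 * A 1 1 - A 1 0 * A 0 1) * A 1 0) - (A 0 0 * A 0 1 + A 1 0 * A 1 1 + A 2 0 * A 2 1) * ((A 0 1 * A 0 1 + A 1 1 * A 1 1 + A 2 1 * A 2 1) * A 0 0 - (A 0 0 * A 0 1 + A 1 0 * A 1 1 + A 2 0 * A 2 1) * A 0 1)))) * HP2 + (((A 0 0 * A 0 0 + A 1 0 * A 1 0 + A 2 0 * A 2 0) * ((A 1 0 * A 2 1 - A 2 0 * A 1 1) * (A 1 0 * A 2 1 - A 2 0 * A 1 1) + (A 2 0 * A 0 1 - A 0 0 * A 2 1) * (A 2 0 * A 0 1 - A 0 0 * A 2 1) + (A 0 0 * A 1 1 - A 1 0 * A 0 1) * (A 0 0 * A 1 1 - A 1 0 * A 0 1)) * A 0 0)) * HQ3 - (((A 0 0 * A 0 0 + A 1 0 * A 1 0 + A 2 0 * A 2 0) * ((A 1 0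 * A 2 1 - A 2 0 * A 1 1) * (A 1 0 * A 2 1 - A 2 0 * A 1 1) + (A 2 0 * A 0 1 - A 0 0 * A 2 1) * (A 2 0 * A 0 1 - A 0 0 * A 2 1) + (A 0 0 * A 1 1 - A 1 0 * A 0 1) * (A 0 0 * A 1 1 - A 1 0 * A 0 1)) * A 0 0)) * HP3
    have h' := (mul_eq_zero.mp aux).resolve_right hTne
    linarith [h']
  have hp2eq : p 1 = p0 1 := by
    have aux : (p 1 - p0 1) * (((A 0 0 * A 0 0 + A 1 0 * A 1 0 + A 2 0 * A 2 0)) * (((A 1 0 * A 2 1 - A 2 0 * A 1 1) * (A 1 0 * A 2 1 - A 2 0 * A 1 1) + (A 2 0 * A 0 1 - A 0 0 * A 2 1) * (A 2 0 * A 0 1 - A 0 0 * A 2 1) + (A 0 0 * A 1 1 - A 1 0 * A 0 1) * (A 0 0 * A 1 1 - A 1 0 * A 0 1)))^2) = 0 := by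
      linear_combination ((((A 1 0 * A 2 1 - A 2 0 * A 1 1) * (A 1 0 * A 2 1 - A 2 0 * A 1 1) + (A 2 0 * A 0 1 - A 0 0 * A 2 1) * (A 2 0 * A 0 1 - A 0 0 * A 2 1) + (A 0 0 * A 1 1 - A 1 0 * A 0 1) * (A 0 0 * A 1 1 - A 1 0 * A 0 1)) * (A 2 0 * A 0 1 - A 0 0 * A 2 1))) * HQ1 - ((((A 1 0 * A 2 1 - A 2 0 * A 1 1) * (A 1 0 * A 2 1 - A 2 0 * A 1 1) + (A 2 0 * A 0 1 - A 0 0 * A 2 1) * (A 2 0 * A 0 1 - A 0 0 * A 2 1) + (A 0 0 * A 1 1 - A 1 0 * A 0 1) * (A 0 0 * A 1 1 - A 1 0 * A 0 1)) * (A 2 0 * A 0 1 - A 0 0 * A 2 1))) * HP1 + (((A 0 0 * A 0 0 + A 1 0 * A 1 0 + A 2 0 * A 2 0) * (-(A 0 1 * A 0 1 + A 1 1 * A 1 1 + A 2 1 * A 2 1) * ((A 0 0 * A 1 1 - A 1 0 * A 0 1) * A 0 0 - (A 1 0 * A 2 1 - A 2 0 * A 1 1) * A 2 0) - (A 0 0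 * A 0 1 + A 1 0 * A 1 1 + A 2 0 * A 2 1) * ((A 0 1 * A 0 1 + A 1 1 * A 1 1 + A 2 1 * A 2 1) * A 1 0 - (A 0 0 * A 0 1 + A 1 0 * A 1 1 + A 2 0 * A 2 1) * A 1 1)))) * HQ2
        - (((A 0 0 * A 0 0 + A 1 0 * A 1 0 + A 2 0 * A 2 0) * (-(A 0 1 * A 0 1 + A 1 1 * A 1 1 + A 2 1 * A 2 1) * ((A 0 0 * A 1 1 - A 1 0 * A 0 1) * A 0 0 - (A 1 0 * A 2 1 - A 2 0 * A 1 1) * A 2 0) - (A 0 0 * A 0 1 + A 1 0 * A 1 1 + A 2 0 * A 2 1) * ((A 0 1 * A 0 1 + A 1 1 * A 1 1 + A 2 1 * A 2 1) * A 1 0 - (A 0 0 * A 0 1 + A 1 0 * A 1 1 + A 2 0 * A 2 1) * A 1 1)))) * HP2 + (((A 0 0 * A 0 0 + A 1 0 * A 1 0 + A 2 0 * A 2 0) * ((A 1 0 * A 2 1 - A 2 0 * A 1 1) * (A 1 0 * A 2 1 - A 2 0 * A 1 1) + (A 2 0 * A 0 1 - A 0 0 * A 2 1) * (A 2 0 *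 A 0 1 - A 0 0 * A 2 1) + (A 0 0 * A 1 1 - A 1 0 * A 0 1) * (A 0 0 * A 1 1 - A 1 0 * A 0 1)) * A 1 0)) * HQ3 - (((A 0 0 * A 0 0 + A 1 0 * A 1 0 + A 2 0 * A 2 0) * ((A 1 0 * A 2 1 - A 2 0 * A 1 1) * (A 1 0 * A 2 1 - A 2 0 * A 1 1) + (A 2 0 * A 0 1 - A 0 0 * A 2 1) * (A 2 0 * A 0 1 - A 0 0 * A 2 1) + (A 0 0 * A 1 1 - A 1 0 * A 0 1) * (A 0 0 * A 1 1 - A 1 0 * A 0 1)) * A 1 0)) * HP3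
    have h' := (mul_eq_zero.mp aux).resolve_right hTne
    linarith [h']
  have hp3eq : p 2 = p0 2 := by
    have aux : (p 2 - p0 2) * (((A 0 0 * A 0 0 + A 1 0 * A 1 0 + A 2 0 * A 2 0)) * (((A 1 0 * A 2 1 - A 2 0 * A 1 1) * (A 1 0 * A 2 1 - A 2 0 * A 1 1) + (A 2 0 * A 0 1 - A 0 0 * A 2 1) * (A 2 0 * A 0 1 - A 0 0 * A 2 1) + (A 0 0 * A 1 1 - A 1 0 * A 0 1) * (A 0 0 * A 1 1 - A 1 0 * A 0 1)))^2) = 0 := by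
      linear_combination ((((A 1 0 * A 2 1 - A 2 0 * A 1 1) * (A 1 0 * A 2 1 - A 2 0 * A 1 1) + (A 2 0 * A 0 1 - A 0 0 * A 2 1) * (A 2 0 * A 0 1 - A 0 0 * A 2 1) + (A 0 0 * A 1 1 - A 1 0 * A 0 1) * (A 0 0 * A 1 1 - A 1 0 * A 0 1)) * (A 0 0 * A 1 1 - A 1 0 * A 0 1))) * HQ1 - ((((A 1 0 * A 2 1 - A 2 0 * A 1 1) * (A 1 0 * A 2 1 - A 2 0 * A 1 1) + (A 2 0 * A 0 1 - A 0 0 * A 2 1) * (A 2 0 * A 0 1 - A 0 0 * A 2 1) + (A 0 0 * A 1 1 - A 1 0 * A 0 1) * (A 0 0 * A 1 1 - A 1 0 * A 0 1)) * (A 0 0 * A 1 1 - A 1 0 * A 0 1))) * HP1 + (((A 0 0 * A 0 0 + A 1 0 * A 1 0 + A 2 0 * A 2 0) * (-(A 0 1 * A 0 1 + A 1 1 * A 1 1 + A 2 1 * A 2 1) * ((A 1 0 * A 2 1 - A 2 0 * A 1 1) * A 1 0 - (A 2 0 * A 0 1 - A 0 0 * A 2 1) * A 0 0) - (A 0 0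 * A 0 1 + A 1 0 * A 1 1 + A 2 0 * A 2 1) * ((A 0 1 * A 0 1 + A 1 1 * A 1 1 + A 2 1 * A 2 1) * A 2 0 - (A 0 0 * A 0 1 + A 1 0 * A 1 1 + A 2 0 * A 2 1) * A 2 1)))) * HQ2
        - (((A 0 0 * A 0 0 + A 1 0 * A 1 0 + A 2 0 * A 2 0) * (-(A 0 1 * A 0 1 + A 1 1 * A 1 1 + A 2 1 * A 2 1) * ((A 1 0 * A 2 1 - A 2 0 * A 1 1) * A 1 0 - (A 2 0 * A 0 1 - A 0 0 * A 2 1) * A 0 0) - (A 0 0 * A 0 1 + A 1 0 * A 1 1 + A 2 0 * A 2 1) * ((A 0 1 * A 0 1 + A 1 1 * A 1 1 + A 2 1 * A 2 1) * A 2 0 - (A 0 0 * A 0 1 + A 1 0 * A 1 1 + A 2 0 * A 2 1) * A 2 1)))) * HP2 + (((A 0 0 * A 0 0 + A 1 0 * A 1 0 + A 2 0 * A 2 0) * ((A 1 0 * A 2 1 - A 2 0 * A 1 1) * (A 1 0 * A 2 1 - A 2 0 * A 1 1) + (A 2 0 * A 0 1 - A 0 0 * A 2 1) * (A 2 0 *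 A 0 1 - A 0 0 * A 2 1) + (A 0 0 * A 1 1 - A 1 0 * A 0 1) * (A 0 0 * A 1 1 - A 1 0 * A 0 1)) * A 2 0)) * HQ3 - (((A 0 0 * A 0 0 + A 1 0 * A 1 0 + A 2 0 * A 2 0) * ((A 1 0 * A 2 1 - A 2 0 * A 1 1) * (A 1 0 * A 2 1 - A 2 0 * A 1 1) + (A 2 0 * A 0 1 - A 0 0 * A 2 1) * (A 2 0 * A 0 1 - A 0 0 * A 2 1) + (A 0 0 * A 1 1 - A 1 0 * A 0 1) * (A 0 0 * A 1 1 - A 1 0 * A 0 1)) * A 2 0)) * HP3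
    have h' := (mul_eq_zero.mp aux).resolve_right hTne
    linarith [h']
  have hpeq : p = p0 := by
    funext i
    fin_cases i
    · exact hp1eq
    · exact hp2eq
    · exact hp3eq
  have hV2 : V2 = U2 := by rw [hV2eq, hpeq, hU2def]
  simp only [Prod.mk.injEq]
  exact ⟨⟨hReq, hpeq⟩, hV1, hV2⟩
end

section
/- In the SU-decomposition of a regular Ξ with upper block columns α₋, α₀, the third column r₃ of R is parallel to α₋ × α₀; hence r₃ is orthogonal to the screw-axis directions of both the first and second screws. -/
open Matrix

theorem stmt11 (A B R U₁ U₂ : Matrix (Fin 3) (Fin 3) ℝ) (p : Fin 3 → ℝ)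
    (hreg1 : (fun i => A i 0) ≠ 0)
    (hreg2 : cross3 (fun i => A i 0) (fun i => A i 1) ≠ 0)
    (hR : SO3 R) (hU₁ : UT3 U₁) (hU₂ : UT3 U₂)
    (hpos1 : 0 < U₁ 0 0) (hpos2 : 0 < U₁ 1 1)
    (hA : A = R * U₁) (hB : B = skew3 p * R * U₁ + R * U₂) :
    (∃ c : ℝ, (fun i => R i 2) =
        c • cross3 (fun i => A i 0) (fun i => A i 1)) ∧
    dot3 (fun i => R i 2) (fun i => A i 0) = 0 ∧
    dot3 (fun i => R i 2) (fun i => A i 1) = 0 := by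
  obtain ⟨horth, hdet⟩ := hR
  have hadj : Matrix.adjugate R = Rᵀ := by
    calc Matrix.adjugate R = (Rᵀ * R) * Matrix.adjugate R := by rw [horth, one_mul]
    _ = Rᵀ * (R * Matrix.adjugate R) := by rw [mul_assoc]
    _ = Rᵀ := by rw [Matrix.mul_adjugate, hdet, one_smul, mul_one]
  rw [Matrix.adjugate_fin_three] at hadj
  have h02 : R 0 2 = R 1 0 * R 2 1 - R 1 1 * R 2 0 := by
    have := congrFun (congrFun hadj 2) 0
    simp [Matrix.transpose_apply] at this
    linarith [this]
  have h12 : R 1 2 = -(R 0 0 * R 2 1) + R 0 1 * R 2 0 := by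
    have := congrFun (congrFun hadj 2) 1
    simp [Matrix.transpose_apply] at this
    linarith [this]
  have h22 : R 2 2 = R 0 0 * R 1 1 - R 0 1 * R 1 0 := by
    have := congrFun (congrFun hadj 2) 2
    simp [Matrix.transpose_apply] at this
    linarith [this]
  have hu10 : U₁ 1 0 = 0 := hU₁ 1 0 (by norm_num)
  have hu20 : U₁ 2 0 = 0 := hU₁ 2 0 (by norm_num)
  have hu21 : U₁ 2 1 = 0 := hU₁ 2 1 (by norm_num)
  have hA0 : ∀ i, A i 0 = R i 0 * U₁ 0 0 := by
    intro i
    rw [hA]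
    simp [Matrix.mul_apply, Fin.sum_univ_three, hu10, hu20]
  have hA1 : ∀ i, A i 1 = R i 0 * U₁ 0 1 + R i 1 * U₁ 1 1 := by
    intro i
    rw [hA]
    simp [Matrix.mul_apply, Fin.sum_univ_three, hu21]
  have e20 := congrFun (congrFun horth 2) 0
  have e21 := congrFun (congrFun horth 2) 1
  simp [Matrix.mul_apply, Fin.sum_univ_three, Matrix.transpose_apply,
    Matrix.one_apply] at e20 e21
  refine ⟨⟨(U₁ 0 0 * U₁ 1 1)⁻¹, ?_⟩, ?_, ?_⟩
  · have hne : U₁ 0 0 * U₁ 1 1 ≠ 0 := by positivity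
    funext i
    fin_cases i
    · show R 0 2 = (U₁ 0 0 * U₁ 1 1)⁻¹ * cross3 (fun i => A i 0) (fun i => A i 1) 0
      simp only [cross3, Matrix.cons_val_zero, Matrix.cons_val_one, Matrix.head_cons,
        Matrix.cons_val_two, Matrix.tail_cons, hA0, hA1]
      field_simp
      linear_combination U₁ 1 1 * h02
    · show R 1 2 = (U₁ 0 0 * U₁ 1 1)⁻¹ * cross3 (fun i => A i 0) (fun i => A i 1) 1
      simp only [cross3, Matrix.cons_val_zero, Matrix.cons_val_one, Matrix.head_cons,
        Matrix.cons_val_two, Matrix.tail_cons, hA0, hA1]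
      field_simp
      linear_combination U₁ 1 1 * h12
    · show R 2 2 = (U₁ 0 0 * U₁ 1 1)⁻¹ * cross3 (fun i => A i 0) (fun i => A i 1) 2
      simp only [cross3, Matrix.cons_val_zero, Matrix.cons_val_one, Matrix.head_cons,
        Matrix.cons_val_two, Matrix.tail_cons, hA0, hA1]
      field_simp
      linear_combination U₁ 1 1 * h22
  · simp only [dot3, Fin.sum_univ_three, hA0]
    linear_combination U₁ 0 0 * e20
  · simp only [dot3, Fin.sum_univ_three, hA1]
    linear_combination U₁ 0 1 * e20 + U₁ 1 1 * e21
end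

section
/- (p lies on the first screw axis) Let Ξ = S(R,p)U be the SU-decomposition of a regular Ξ with first column screw (α, β), α ≠ 0. Then p satisfies p = (α × β)/‖α‖² + t · α/‖α‖ for some t ∈ ℝ; i.e., p lies on the line {(α × β)/‖α‖² + t · α/‖α‖ : t ∈ ℝ}, the screw axis of (α, β). -/
open Matrix

theorem stmt12 (A B R U₁ U₂ : Matrix (Fin 3) (Fin 3) ℝ) (p : Fin 3 → ℝ)
    (hreg1 : (fun i => A i 0) ≠ 0)
    (hreg2 : cross3 (fun i => A i 0) (fun i => A i 1) ≠ 0)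
    (hR : SO3 R) (hU₁ : UT3 U₁) (hU₂ : UT3 U₂)
    (hpos1 : 0 < U₁ 0 0) (hpos2 : 0 < U₁ 1 1)
    (hA : A = R * U₁) (hB : B = skew3 p * R * U₁ + R * U₂) :
    ∃ t : ℝ,
      p = (enorm3 (fun i => A i 0) ^ 2)⁻¹ •
            cross3 (fun i => A i 0) (fun i => B i 0) +
          t • ((enorm3 (fun i => A i 0))⁻¹ • (fun i => A i 0)) := by
  set a : Fin 3 → ℝ := fun i => A i 0 with ha
  set b : Fin 3 → ℝ := fun i => B i 0 with hb
  have hU10 : U₁ 1 0 = 0 := hU₁ 1 0 (by norm_num)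
  have hU20 : U₁ 2 0 = 0 := hU₁ 2 0 (by norm_num)
  have hV10 : U₂ 1 0 = 0 := hU₂ 1 0 (by norm_num)
  have hV20 : U₂ 2 0 = 0 := hU₂ 2 0 (by norm_num)
  have hU00 : U₁ 0 0 ≠ 0 := ne_of_gt hpos1
  have h1 : ∀ i, a i = R i 0 * U₁ 0 0 := by
    intro i
    simp only [ha, hA, Matrix.mul_apply, Fin.sum_univ_three, hU10, hU20]
    ring
  have h2 : ∀ i, b i = (cross3 p a) i + (U₂ 0 0 / U₁ 0 0) * a i := by
    intro i
    have hRi : R i 0 = a i / U₁ 0 0 := by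
      rw [h1 i]; field_simp
    simp only [hb, hB, Matrix.add_apply, Matrix.mul_apply, Fin.sum_univ_three,
      hU10, hU20, hV10, hV20]
    fin_cases i <;>
      · simp only [cross3, skew3, Matrix.cons_val', Matrix.cons_val_zero,
          Matrix.cons_val_one, Matrix.head_cons, Matrix.empty_val',
          Matrix.cons_val_fin_one, Matrix.head_fin_const, Matrix.cons_val_two,
          Matrix.tail_cons] at *
        rw [h1 0, h1 1, h1 2] <;> try rw [hRi]
        field_simp
        simp only [Fin.zero_eta, Fin.mk_one, Fin.reduceFinMk, Matrix.of_apply, Matrix.cons_val',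
          Matrix.cons_val_zero, Matrix.cons_val_one, Matrix.cons_val_two, Matrix.head_cons,
          Matrix.tail_cons, Matrix.empty_val', Matrix.cons_val_fin_one, Matrix.head_fin_const]
        ring
  set n2 : ℝ := ∑ i, a i ^ 2 with hn2def
  have hn2eq : n2 = a 0 ^ 2 + a 1 ^ 2 + a 2 ^ 2 := by
    simp [hn2def, Fin.sum_univ_three]
  have hn2pos : 0 < n2 := by
    rw [hn2eq]
    obtain ⟨i, hi⟩ := Function.ne_iff.mp hreg1
    simp only [Pi.zero_apply] at hi
    fin_cases i <;> positivity
  have hnorm : enorm3 a ^ 2 = n2 := Real.sq_sqrt (by positivity)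
  have hnpos : 0 < enorm3 a := by
    unfold enorm3
    exact Real.sqrt_pos.mpr hn2pos
  set d : ℝ := dot3 a p with hd
  have hdeq : d = a 0 * p 0 + a 1 * p 1 + a 2 * p 2 := by
    simp [hd, dot3, Fin.sum_univ_three]
  have h3 : ∀ i, cross3 a b i = n2 * p i - d * a i := by
    intro i
    fin_cases i <;>
      · simp only [cross3, Matrix.cons_val_zero, Matrix.cons_val_one,
          Matrix.head_cons, Matrix.cons_val_two, Matrix.tail_cons]
        rw [h2 0, h2 1, h2 2, hn2eq, hdeq]
        simp only [cross3, Matrix.cons_val_zero, Matrix.cons_val_one,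
          Matrix.head_cons, Matrix.cons_val_two, Matrix.tail_cons,
          Fin.zero_eta, Fin.mk_one, Fin.mk_zero, Fin.reduceFinMk]
        ring
  refine ⟨d / enorm3 a, ?_⟩
  funext i
  simp only [Pi.add_apply, Pi.smul_apply, smul_eq_mul]
  rw [h3 i, hnorm]
  have hn : enorm3 a ≠ 0 := ne_of_gt hnpos
  field_simp
  linear_combination (d * a i) * hnorm
end

section
/- (Bijectivity of the SU-decomposition on the regular set) The map (R, p, U) ↦ S(R,p) U is a bijection from the set {(R, p, U) : R ∈ SO(3), p ∈ ℝ³, U = [U₁;U₂] with U₁, U₂ upper-triangular, (U₁)₁₁ > 0, (U₁)₂₂ > 0} onto the set of 6×3 matrices Ξ whose upper block A has nonzero first column and linearly independent first two columns. -/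
open Matrix

/-- The map (R, p, (U₁, U₂)) ↦ S(R,p) · [U₁; U₂]. -/
noncomputable def SUmap
    (x : (Matrix (Fin 3) (Fin 3) ℝ × (Fin 3 → ℝ)) ×
         (Matrix (Fin 3) (Fin 3) ℝ × Matrix (Fin 3) (Fin 3) ℝ)) :
    Matrix (Fin 3 ⊕ Fin 3) (Fin 3) ℝ :=
  Scr x.1.1 x.1.2 *
    Matrix.of (Sum.elim (fun i j => x.2.1 i j) (fun i j => x.2.2 i j))
lemma skew3_mulVec (p w : Fin 3 → ℝ) : skew3 p *ᵥ w = cross3 p w := by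
  funext i
  fin_cases i <;>
    simp [skew3, cross3, Matrix.mulVec, dotProduct, Fin.sum_univ_three] <;> ring

lemma SO3.mulT {R : Matrix (Fin 3) (Fin 3) ℝ} (h : SO3 R) : R * Rᵀ = 1 :=
  mul_eq_one_comm.mp h.1

lemma SO3.adj {R : Matrix (Fin 3) (Fin 3) ℝ} (h : SO3 R) : R.adjugate = Rᵀ := by
  calc R.adjugate = R.adjugate * (R * Rᵀ) := by rw [h.mulT, mul_one]
    _ = (R.adjugate * R) * Rᵀ := by rw [mul_assoc]
    _ = Rᵀ := by rw [Matrix.adjugate_mul, h.2, one_smul, Matrix.one_mul]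

lemma cross3_mulVec {R : Matrix (Fin 3) (Fin 3) ℝ} (h : SO3 R) (a b : Fin 3 → ℝ) :
    cross3 (R *ᵥ a) (R *ᵥ b) = R *ᵥ cross3 a b := by
  have key : cross3 (R *ᵥ a) (R *ᵥ b) = (R.adjugate)ᵀ *ᵥ cross3 a b := by
    funext i
    fin_cases i <;>
      simp [cross3, Matrix.mulVec, dotProduct, Fin.sum_univ_three,
        Matrix.adjugate_fin_three, Matrix.transpose_apply] <;> ring
  rw [key, h.adj, Matrix.transpose_transpose]

lemma SO3.mulVec_ne {R : Matrix (Fin 3) (Fin 3) ℝ} (h : SO3 R) {v : Fin 3 → ℝ}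
    (hv : v ≠ 0) : R *ᵥ v ≠ 0 := by
  intro hz
  apply hv
  have : Rᵀ *ᵥ (R *ᵥ v) = v := by
    rw [Matrix.mulVec_mulVec, h.1, Matrix.one_mulVec]
  rw [← this, hz, Matrix.mulVec_zero]

lemma skew_conj {R : Matrix (Fin 3) (Fin 3) ℝ} (h : SO3 R) (q : Fin 3 → ℝ) :
    skew3 (R *ᵥ q) * R = R * skew3 q := by
  ext i j
  have key := congrFun (by
    rw [skew3_mulVec, skew3_mulVec, cross3_mulVec h] :
    skew3 (R *ᵥ q) *ᵥ (R *ᵥ Pi.single j 1) = R *ᵥ (skew3 q *ᵥ Pi.single j 1)) i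
  rw [Matrix.mulVec_mulVec, Matrix.mulVec_mulVec] at key
  simpa using key
lemma enorm3_sq (v : Fin 3 → ℝ) : enorm3 v ^ 2 = v 0 ^ 2 + v 1 ^ 2 + v 2 ^ 2 := by
  rw [enorm3, Real.sq_sqrt (by positivity), Fin.sum_univ_three]

lemma enorm3_pos {v : Fin 3 → ℝ} (h : v ≠ 0) : 0 < enorm3 v := by
  rcases Function.ne_iff.mp h with ⟨i, hi⟩
  apply Real.sqrt_pos.mpr
  have h1 : v i ^ 2 ≤ ∑ j, v j ^ 2 :=
    Finset.single_le_sum (f := fun j => v j ^ 2) (fun j _ => sq_nonneg _) (Finset.mem_univ i)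
  have h2 : 0 < v i ^ 2 := by cases (sq_nonneg (v i)).lt_or_eq with
    | inl h => exact h
    | inr h => exact absurd (by nlinarith : v i = 0) hi
  linarith

lemma SO3.transpose {R : Matrix (Fin 3) (Fin 3) ℝ} (h : SO3 R) : SO3 Rᵀ :=
  ⟨by rw [Matrix.transpose_transpose]; exact h.mulT, by rw [Matrix.det_transpose]; exact h.2⟩

def gA (Ξ : Matrix (Fin 3 ⊕ Fin 3) (Fin 3) ℝ) : Matrix (Fin 3) (Fin 3) ℝ :=
  Matrix.of fun i j => Ξ (Sum.inl i) j

def gB (Ξ : Matrix (Fin 3 ⊕ Fin 3) (Fin 3) ℝ) : Matrix (Fin 3) (Fin 3) ℝ :=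
  Matrix.of fun i j => Ξ (Sum.inr i) j

def colA (Ξ : Matrix (Fin 3 ⊕ Fin 3) (Fin 3) ℝ) (j : Fin 3) : Fin 3 → ℝ :=
  fun i => Ξ (Sum.inl i) j

noncomputable def gR (Ξ : Matrix (Fin 3 ⊕ Fin 3) (Fin 3) ℝ) : Matrix (Fin 3) (Fin 3) ℝ :=
  Matrix.of fun i j =>
    ![(enorm3 (colA Ξ 0))⁻¹ • colA Ξ 0,
      cross3 ((enorm3 (cross3 (colA Ξ 0) (colA Ξ 1)))⁻¹ • cross3 (colA Ξ 0) (colA Ξ 1))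
        ((enorm3 (colA Ξ 0))⁻¹ • colA Ξ 0),
      (enorm3 (cross3 (colA Ξ 0) (colA Ξ 1)))⁻¹ • cross3 (colA Ξ 0) (colA Ξ 1)] j i

noncomputable def gU1 (Ξ : Matrix (Fin 3 ⊕ Fin 3) (Fin 3) ℝ) := (gR Ξ)ᵀ * gA Ξ
noncomputable def gM (Ξ : Matrix (Fin 3 ⊕ Fin 3) (Fin 3) ℝ) := (gR Ξ)ᵀ * gB Ξ
noncomputable def gq (Ξ : Matrix (Fin 3 ⊕ Fin 3) (Fin 3) ℝ) : Fin 3 → ℝ :=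
  ![(gM Ξ 2 1 + (- gM Ξ 2 0 / gU1 Ξ 0 0) * gU1 Ξ 0 1) / gU1 Ξ 1 1,
    - gM Ξ 2 0 / gU1 Ξ 0 0,
    gM Ξ 1 0 / gU1 Ξ 0 0]
noncomputable def gp (Ξ : Matrix (Fin 3 ⊕ Fin 3) (Fin 3) ℝ) := gR Ξ *ᵥ gq Ξ
noncomputable def gU2 (Ξ : Matrix (Fin 3 ⊕ Fin 3) (Fin 3) ℝ) := gM Ξ - skew3 (gq Ξ) * gU1 Ξ
noncomputable def ginv (Ξ : Matrix (Fin 3 ⊕ Fin 3) (Fin 3) ℝ) := ((gR Ξ, gp Ξ), (gU1 Ξ, gU2 Ξ))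

set_option maxHeartbeats 1000000 in
lemma gR_SO3 {Ξ : Matrix (Fin 3 ⊕ Fin 3) (Fin 3) ℝ} (h1 : colA Ξ 0 ≠ 0)
    (h2 : cross3 (colA Ξ 0) (colA Ξ 1) ≠ 0) : SO3 (gR Ξ) := by
  set a := colA Ξ 0 with ha
  set b := colA Ξ 1 with hb
  have hcc : cross3 a b = ![a 1 * b 2 - a 2 * b 1, a 2 * b 0 - a 0 * b 2,
      a 0 * b 1 - a 1 * b 0] := rfl
  have h0 : enorm3 a ≠ 0 := (enorm3_pos h1).ne'
  have h2' : enorm3 ![a 1 * b 2 - a 2 * b 1, a 2 * b 0 - a 0 * b 2, a 0 * b 1 - a 1 * b 0] ≠ 0 := by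
    rw [← hcc]; exact (enorm3_pos h2).ne'
  have k0 : ((enorm3 a)⁻¹) ^ 2 * (a 0 ^ 2 + a 1 ^ 2 + a 2 ^ 2) = 1 := by
    rw [← enorm3_sq]; field_simp
  have k2 : ((enorm3 ![a 1 * b 2 - a 2 * b 1, a 2 * b 0 - a 0 * b 2,
        a 0 * b 1 - a 1 * b 0])⁻¹) ^ 2 *
      ((a 1 * b 2 - a 2 * b 1) ^ 2 + (a 2 * b 0 - a 0 * b 2) ^ 2 +
        (a 0 * b 1 - a 1 * b 0) ^ 2) = 1 := by
    have h := enorm3_sq (cross3 a b)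
    rw [hcc] at h
    simp only [Matrix.cons_val_zero, Matrix.cons_val_one, Matrix.head_cons,
      Matrix.cons_val_two, Matrix.tail_cons] at h
    rw [← h, inv_pow, inv_mul_cancel₀ (pow_ne_zero 2 h2')]
  constructor
  · ext i j
    fin_cases i
    · fin_cases j
      · simp only [gR, cross3, Matrix.mul_apply, Fin.sum_univ_three, Matrix.of_apply,
        Matrix.transpose_apply, Matrix.cons_val', Matrix.cons_val_zero, Matrix.cons_val_one,
        Matrix.head_cons, Matrix.cons_val_two, Matrix.tail_cons, Matrix.head_fin_const,
        Matrix.empty_val', Matrix.cons_val_fin_one, Pi.smul_apply, smul_eq_mul,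
        Matrix.one_apply, Fin.isValue, Fin.mk_zero, Fin.mk_one, ite_true, ite_false,
        ↓reduceIte, Fin.reduceEq, one_ne_zero, Fin.zero_eta, Fin.reduceFinMk]
        linear_combination k0
      · simp only [gR, cross3, Matrix.mul_apply, Fin.sum_univ_three, Matrix.of_apply,
        Matrix.transpose_apply, Matrix.cons_val', Matrix.cons_val_zero, Matrix.cons_val_one,
        Matrix.head_cons, Matrix.cons_val_two, Matrix.tail_cons, Matrix.head_fin_const,
        Matrix.empty_val', Matrix.cons_val_fin_one, Pi.smul_apply, smul_eq_mul,
        Matrix.one_apply, Fin.isValue, Fin.mk_zero, Fin.mk_one, ite_true, ite_false,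
        ↓reduceIte, Fin.reduceEq, one_ne_zero, Fin.zero_eta, Fin.reduceFinMk]
        ring
      · simp only [gR, cross3, Matrix.mul_apply, Fin.sum_univ_three, Matrix.of_apply,
        Matrix.transpose_apply, Matrix.cons_val', Matrix.cons_val_zero, Matrix.cons_val_one,
        Matrix.head_cons, Matrix.cons_val_two, Matrix.tail_cons, Matrix.head_fin_const,
        Matrix.empty_val', Matrix.cons_val_fin_one, Pi.smul_apply, smul_eq_mul,
        Matrix.one_apply, Fin.isValue, Fin.mk_zero, Fin.mk_one, ite_true, ite_false,
        ↓reduceIte, Fin.reduceEq, one_ne_zero, Fin.zero_eta, Fin.reduceFinMk]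
        ring
    · fin_cases j
      · simp only [gR, cross3, Matrix.mul_apply, Fin.sum_univ_three, Matrix.of_apply,
        Matrix.transpose_apply, Matrix.cons_val', Matrix.cons_val_zero, Matrix.cons_val_one,
        Matrix.head_cons, Matrix.cons_val_two, Matrix.tail_cons, Matrix.head_fin_const,
        Matrix.empty_val', Matrix.cons_val_fin_one, Pi.smul_apply, smul_eq_mul,
        Matrix.one_apply, Fin.isValue, Fin.mk_zero, Fin.mk_one, ite_true, ite_false,
        ↓reduceIte, Fin.reduceEq, one_ne_zero, Fin.zero_eta, Fin.reduceFinMk]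
        ring
      · simp only [gR, cross3, Matrix.mul_apply, Fin.sum_univ_three, Matrix.of_apply,
        Matrix.transpose_apply, Matrix.cons_val', Matrix.cons_val_zero, Matrix.cons_val_one,
        Matrix.head_cons, Matrix.cons_val_two, Matrix.tail_cons, Matrix.head_fin_const,
        Matrix.empty_val', Matrix.cons_val_fin_one, Pi.smul_apply, smul_eq_mul,
        Matrix.one_apply, Fin.isValue, Fin.mk_zero, Fin.mk_one, ite_true, ite_false,
        ↓reduceIte, Fin.reduceEq, one_ne_zero, Fin.zero_eta, Fin.reduceFinMk]
        linear_combination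
          (((enorm3 ![a 1 * b 2 - a 2 * b 1, a 2 * b 0 - a 0 * b 2,
              a 0 * b 1 - a 1 * b 0])⁻¹) ^ 2 *
            ((a 1 * b 2 - a 2 * b 1) ^ 2 + (a 2 * b 0 - a 0 * b 2) ^ 2 +
              (a 0 * b 1 - a 1 * b 0) ^ 2)) * k0 + k2
      · simp only [gR, cross3, Matrix.mul_apply, Fin.sum_univ_three, Matrix.of_apply,
        Matrix.transpose_apply, Matrix.cons_val', Matrix.cons_val_zero, Matrix.cons_val_one,
        Matrix.head_cons, Matrix.cons_val_two, Matrix.tail_cons, Matrix.head_fin_const,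
        Matrix.empty_val', Matrix.cons_val_fin_one, Pi.smul_apply, smul_eq_mul,
        Matrix.one_apply, Fin.isValue, Fin.mk_zero, Fin.mk_one, ite_true, ite_false,
        ↓reduceIte, Fin.reduceEq, one_ne_zero, Fin.zero_eta, Fin.reduceFinMk]
        ring
    · fin_cases j
      · simp only [gR, cross3, Matrix.mul_apply, Fin.sum_univ_three, Matrix.of_apply,
        Matrix.transpose_apply, Matrix.cons_val', Matrix.cons_val_zero, Matrix.cons_val_one,
        Matrix.head_cons, Matrix.cons_val_two, Matrix.tail_cons, Matrix.head_fin_const,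
        Matrix.empty_val', Matrix.cons_val_fin_one, Pi.smul_apply, smul_eq_mul,
        Matrix.one_apply, Fin.isValue, Fin.mk_zero, Fin.mk_one, ite_true, ite_false,
        ↓reduceIte, Fin.reduceEq, one_ne_zero, Fin.zero_eta, Fin.reduceFinMk]
        ring
      · simp only [gR, cross3, Matrix.mul_apply, Fin.sum_univ_three, Matrix.of_apply,
        Matrix.transpose_apply, Matrix.cons_val', Matrix.cons_val_zero, Matrix.cons_val_one,
        Matrix.head_cons, Matrix.cons_val_two, Matrix.tail_cons, Matrix.head_fin_const,
        Matrix.empty_val', Matrix.cons_val_fin_one, Pi.smul_apply, smul_eq_mul,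
        Matrix.one_apply, Fin.isValue, Fin.mk_zero, Fin.mk_one, ite_true, ite_false,
        ↓reduceIte, Fin.reduceEq, one_ne_zero, Fin.zero_eta, Fin.reduceFinMk]
        ring
      · simp only [gR, cross3, Matrix.mul_apply, Fin.sum_univ_three, Matrix.of_apply,
        Matrix.transpose_apply, Matrix.cons_val', Matrix.cons_val_zero, Matrix.cons_val_one,
        Matrix.head_cons, Matrix.cons_val_two, Matrix.tail_cons, Matrix.head_fin_const,
        Matrix.empty_val', Matrix.cons_val_fin_one, Pi.smul_apply, smul_eq_mul,
        Matrix.one_apply, Fin.isValue, Fin.mk_zero, Fin.mk_one, ite_true, ite_false,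
        ↓reduceIte, Fin.reduceEq, one_ne_zero, Fin.zero_eta, Fin.reduceFinMk]
        linear_combination k2
  · rw [Matrix.det_fin_three]
    simp only [gR, cross3, Matrix.of_apply, Matrix.cons_val', Matrix.cons_val_zero,
      Matrix.cons_val_one, Matrix.head_cons, Matrix.cons_val_two, Matrix.tail_cons,
      Matrix.empty_val', Matrix.cons_val_fin_one, Pi.smul_apply, smul_eq_mul, Fin.isValue,
      Matrix.vecHead, Matrix.vecTail, Function.comp_apply, Fin.succ_zero_eq_one,
      Fin.succ_one_eq_two, Fin.reduceFinMk]
    linear_combination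
          (((enorm3 ![a 1 * b 2 - a 2 * b 1, a 2 * b 0 - a 0 * b 2,
              a 0 * b 1 - a 1 * b 0])⁻¹) ^ 2 *
            ((a 1 * b 2 - a 2 * b 1) ^ 2 + (a 2 * b 0 - a 0 * b 2) ^ 2 +
              (a 0 * b 1 - a 1 * b 0) ^ 2)) * k0 + k2
lemma SUmap_eq (x : (Matrix (Fin 3) (Fin 3) ℝ × (Fin 3 → ℝ)) ×
    (Matrix (Fin 3) (Fin 3) ℝ × Matrix (Fin 3) (Fin 3) ℝ)) :
    SUmap x = Matrix.fromRows (x.1.1 * x.2.1)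
      (skew3 x.1.2 * x.1.1 * x.2.1 + x.1.1 * x.2.2) := by
  have h : Matrix.of (Sum.elim (fun i j => x.2.1 i j) (fun i j => x.2.2 i j)) =
      Matrix.fromRows x.2.1 x.2.2 := rfl
  rw [SUmap, h, Scr, Matrix.fromBlocks_mul_fromRows]
  simp [Matrix.zero_mul]

lemma sumsq_pos {v : Fin 3 → ℝ} (h : v ≠ 0) : 0 < v 0 ^ 2 + v 1 ^ 2 + v 2 ^ 2 := by
  rw [← enorm3_sq]; exact pow_pos (enorm3_pos h) 2

variable {Ξ : Matrix (Fin 3 ⊕ Fin 3) (Fin 3) ℝ}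

lemma gU1_UT3 : UT3 (gU1 Ξ) := by
  intro i j hij
  fin_cases i <;> fin_cases j <;>
    first
    | (exfalso; revert hij; decide)
    | (simp only [gU1, gA, gR, cross3, colA, Matrix.mul_apply, Fin.sum_univ_three,
        Matrix.of_apply, Matrix.transpose_apply, Matrix.cons_val', Matrix.cons_val_zero,
        Matrix.cons_val_one, Matrix.head_cons, Matrix.cons_val_two, Matrix.tail_cons,
        Matrix.empty_val', Matrix.cons_val_fin_one, Pi.smul_apply, smul_eq_mul,
        Fin.isValue, Fin.zero_eta, Fin.mk_one, Fin.reduceFinMk, Matrix.vecHead,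
        Matrix.vecTail, Function.comp_apply, Fin.succ_zero_eq_one, Fin.succ_one_eq_two]
       ring)

lemma gU1_00_pos (h1 : colA Ξ 0 ≠ 0) : 0 < gU1 Ξ 0 0 := by
  have e : gU1 Ξ 0 0 = (enorm3 (colA Ξ 0))⁻¹ *
      (Ξ (Sum.inl 0) 0 ^ 2 + Ξ (Sum.inl 1) 0 ^ 2 + Ξ (Sum.inl 2) 0 ^ 2) := by
    simp only [gU1, gA, gR, cross3, colA, Matrix.mul_apply, Fin.sum_univ_three,
      Matrix.of_apply, Matrix.transpose_apply, Matrix.cons_val', Matrix.cons_val_zero,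
      Matrix.cons_val_one, Matrix.head_cons, Matrix.cons_val_two, Matrix.tail_cons,
      Matrix.empty_val', Matrix.cons_val_fin_one, Pi.smul_apply, smul_eq_mul,
      Fin.isValue, Matrix.vecHead, Matrix.vecTail, Function.comp_apply]
    ring
  rw [e]
  exact mul_pos (inv_pos.mpr (enorm3_pos h1)) (sumsq_pos h1)

lemma gU1_11_pos (h1 : colA Ξ 0 ≠ 0) (h2 : cross3 (colA Ξ 0) (colA Ξ 1) ≠ 0) : 0 < gU1 Ξ 1 1 := by
  have hcc : cross3 (colA Ξ 0) (colA Ξ 1) =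
      ![Ξ (Sum.inl 1) 0 * Ξ (Sum.inl 2) 1 - Ξ (Sum.inl 2) 0 * Ξ (Sum.inl 1) 1,
        Ξ (Sum.inl 2) 0 * Ξ (Sum.inl 0) 1 - Ξ (Sum.inl 0) 0 * Ξ (Sum.inl 2) 1,
        Ξ (Sum.inl 0) 0 * Ξ (Sum.inl 1) 1 - Ξ (Sum.inl 1) 0 * Ξ (Sum.inl 0) 1] := rfl
  have e : gU1 Ξ 1 1 = (enorm3 (cross3 (colA Ξ 0) (colA Ξ 1)))⁻¹ * (enorm3 (colA Ξ 0))⁻¹ *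
      ((Ξ (Sum.inl 1) 0 * Ξ (Sum.inl 2) 1 - Ξ (Sum.inl 2) 0 * Ξ (Sum.inl 1) 1) ^ 2 +
       (Ξ (Sum.inl 2) 0 * Ξ (Sum.inl 0) 1 - Ξ (Sum.inl 0) 0 * Ξ (Sum.inl 2) 1) ^ 2 +
       (Ξ (Sum.inl 0) 0 * Ξ (Sum.inl 1) 1 - Ξ (Sum.inl 1) 0 * Ξ (Sum.inl 0) 1) ^ 2) := by
    simp only [gU1, gA, gR, cross3, colA, Matrix.mul_apply, Fin.sum_univ_three,
      Matrix.of_apply, Matrix.transpose_apply, Matrix.cons_val', Matrix.cons_val_zero,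
      Matrix.cons_val_one, Matrix.head_cons, Matrix.cons_val_two, Matrix.tail_cons,
      Matrix.empty_val', Matrix.cons_val_fin_one, Pi.smul_apply, smul_eq_mul,
      Fin.isValue, Fin.mk_one, Fin.reduceFinMk, Matrix.vecHead, Matrix.vecTail,
      Function.comp_apply, Fin.succ_zero_eq_one, Fin.succ_one_eq_two]
    rw [← hcc]
    ring
  have hP : 0 < (Ξ (Sum.inl 1) 0 * Ξ (Sum.inl 2) 1 - Ξ (Sum.inl 2) 0 * Ξ (Sum.inl 1) 1) ^ 2 +
      (Ξ (Sum.inl 2) 0 * Ξ (Sum.inl 0) 1 - Ξ (Sum.inl 0) 0 * Ξ (Sum.inl 2) 1) ^ 2 +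
      (Ξ (Sum.inl 0) 0 * Ξ (Sum.inl 1) 1 - Ξ (Sum.inl 1) 0 * Ξ (Sum.inl 0) 1) ^ 2 := by
    have := sumsq_pos h2
    rw [hcc] at this
    simpa using this
  rw [e]
  have hn1 := enorm3_pos h1
  have hn2 := enorm3_pos h2
  positivity

lemma gU2_UT3 (h1 : colA Ξ 0 ≠ 0) (h2 : cross3 (colA Ξ 0) (colA Ξ 1) ≠ 0) : UT3 (gU2 Ξ) := by
  have h10 : gU1 Ξ 1 0 = 0 := gU1_UT3 1 0 (by norm_num)
  have h20 : gU1 Ξ 2 0 = 0 := gU1_UT3 2 0 (by norm_num)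
  have h21 : gU1 Ξ 2 1 = 0 := gU1_UT3 2 1 (by norm_num)
  have h00 : gU1 Ξ 0 0 ≠ 0 := (gU1_00_pos h1).ne'
  have h11 : gU1 Ξ 1 1 ≠ 0 := (gU1_11_pos h1 h2).ne'
  intro i j hij
  fin_cases i <;> fin_cases j <;>
    first
    | (exfalso; revert hij; decide)
    | (simp only [gU2, gq, skew3, Matrix.sub_apply, Matrix.mul_apply, Fin.sum_univ_three,
        Matrix.of_apply, Matrix.cons_val', Matrix.cons_val_zero, Matrix.cons_val_one,
        Matrix.head_cons, Matrix.cons_val_two, Matrix.tail_cons, Matrix.empty_val',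
        Matrix.cons_val_fin_one, Fin.isValue, Fin.zero_eta, Fin.mk_one, Fin.reduceFinMk,
        Matrix.vecHead, Matrix.vecTail, Function.comp_apply, Fin.succ_zero_eq_one,
        Fin.succ_one_eq_two]
       field_simp
       try simp [h10, h20, h21]
       try ring)
lemma cross3_smul (s t : ℝ) (u v : Fin 3 → ℝ) :
    cross3 (s • u) (t • v) = (s * t) • cross3 u v := by
  funext i; fin_cases i <;> simp [cross3] <;> ring

lemma SUmap_mapsTo {x : (Matrix (Fin 3) (Fin 3) ℝ × (Fin 3 → ℝ)) ×
    (Matrix (Fin 3) (Fin 3) ℝ × Matrix (Fin 3) (Fin 3) ℝ)}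
    (hR : SO3 x.1.1) (hU1 : UT3 x.2.1) (h00 : 0 < x.2.1 0 0) (h11 : 0 < x.2.1 1 1) :
    (fun i => SUmap x (Sum.inl i) 0) ≠ 0 ∧
    cross3 (fun i => SUmap x (Sum.inl i) 0) (fun i => SUmap x (Sum.inl i) 1) ≠ 0 := by
  obtain ⟨⟨R, p⟩, U1, U2⟩ := x
  simp only at hR hU1 h00 h11 ⊢
  have hcol : ∀ j : Fin 3, (fun i => SUmap ((R, p), (U1, U2)) (Sum.inl i) j) =
      R *ᵥ (fun k => U1 k j) := by
    intro j; funext i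
    rw [SUmap_eq]
    simp [Matrix.mul_apply, Matrix.mulVec, dotProduct]
  have hc0 : (fun k => U1 k 0) = ![U1 0 0, 0, 0] := by
    funext k
    fin_cases k <;>
      simp [hU1 1 0 (by norm_num), hU1 2 0 (by norm_num)]
  have hc1 : (fun k => U1 k 1) = ![U1 0 1, U1 1 1, 0] := by
    funext k
    fin_cases k <;> simp [hU1 2 1 (by norm_num)]
  constructor
  · rw [hcol 0, hc0]
    apply hR.mulVec_ne
    intro hzero
    have h := congrFun hzero 0
    simp at h
    linarith
  · rw [hcol 0, hcol 1, hc0, hc1, cross3_mulVec hR]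
    apply hR.mulVec_ne
    have hcr : cross3 ![U1 0 0, 0, 0] ![U1 0 1, U1 1 1, 0] = ![0, 0, U1 0 0 * U1 1 1] := by
      funext i; fin_cases i <;> simp [cross3]
    rw [hcr]
    intro hzero
    have h := congrFun hzero 2
    simp at h
    rcases h with h | h <;> linarith
lemma gA_eq {x : (Matrix (Fin 3) (Fin 3) ℝ × (Fin 3 → ℝ)) ×
    (Matrix (Fin 3) (Fin 3) ℝ × Matrix (Fin 3) (Fin 3) ℝ)} :
    gA (SUmap x) = x.1.1 * x.2.1 := by
  ext i j
  rw [SUmap_eq]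
  rfl

lemma gB_eq {x : (Matrix (Fin 3) (Fin 3) ℝ × (Fin 3 → ℝ)) ×
    (Matrix (Fin 3) (Fin 3) ℝ × Matrix (Fin 3) (Fin 3) ℝ)} :
    gB (SUmap x) = skew3 x.1.2 * x.1.1 * x.2.1 + x.1.1 * x.2.2 := by
  ext i j
  rw [SUmap_eq]
  rfl

lemma fromRows_gAB (Ξ : Matrix (Fin 3 ⊕ Fin 3) (Fin 3) ℝ) :
    Matrix.fromRows (gA Ξ) (gB Ξ) = Ξ := by
  ext i j
  cases i <;> rfl

lemma SUmap_ginv {Ξ : Matrix (Fin 3 ⊕ Fin 3) (Fin 3) ℝ} (h1 : colA Ξ 0 ≠ 0)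
    (h2 : cross3 (colA Ξ 0) (colA Ξ 1) ≠ 0) : SUmap (ginv Ξ) = Ξ := by
  have hSO := gR_SO3 h1 h2
  have hA : gR Ξ * gU1 Ξ = gA Ξ := by
    rw [gU1, ← Matrix.mul_assoc, hSO.mulT, Matrix.one_mul]
  have hB : skew3 (gp Ξ) * gR Ξ * gU1 Ξ + gR Ξ * gU2 Ξ = gB Ξ := by
    rw [gp, gU2, skew_conj hSO, Matrix.mul_sub, Matrix.mul_assoc (gR Ξ) (skew3 (gq Ξ)) (gU1 Ξ),
      add_sub_cancel, gM, ← Matrix.mul_assoc, hSO.mulT, Matrix.one_mul]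
  have : SUmap (ginv Ξ) = Matrix.fromRows (gR Ξ * gU1 Ξ)
      (skew3 (gp Ξ) * gR Ξ * gU1 Ξ + gR Ξ * gU2 Ξ) := SUmap_eq _
  rw [this, hA, hB, fromRows_gAB]
lemma ginv_SUmap {x : (Matrix (Fin 3) (Fin 3) ℝ × (Fin 3 → ℝ)) ×
    (Matrix (Fin 3) (Fin 3) ℝ × Matrix (Fin 3) (Fin 3) ℝ)}
    (hR : SO3 x.1.1) (hU1 : UT3 x.2.1) (hU2 : UT3 x.2.2)
    (h00 : 0 < x.2.1 0 0) (h11 : 0 < x.2.1 1 1) : ginv (SUmap x) = x := by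
  obtain ⟨⟨R, p⟩, U1, U2⟩ := x
  simp only at hR hU1 hU2 h00 h11 ⊢
  set Ξ := SUmap ((R, p), (U1, U2)) with hΞ
  have h10 := hU1 1 0 (by norm_num)
  have h20 := hU1 2 0 (by norm_num)
  have h21 := hU1 2 1 (by norm_num)
  have k10 := hU2 1 0 (by norm_num)
  have k20 := hU2 2 0 (by norm_num)
  have k21 := hU2 2 1 (by norm_num)
  have hcol : ∀ j : Fin 3, colA Ξ j = R *ᵥ (fun k => U1 k j) := by
    intro j; funext i
    rw [hΞ, colA, SUmap_eq]
    simp [Matrix.mul_apply, Matrix.mulVec, dotProduct]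
  have ha0 : colA Ξ 0 = R *ᵥ ![U1 0 0, 0, 0] := by
    rw [hcol 0]
    funext i
    simp [Matrix.mulVec, dotProduct, Fin.sum_univ_three, h10, h20]
  have ha1 : colA Ξ 1 = R *ᵥ ![U1 0 1, U1 1 1, 0] := by
    rw [hcol 1]
    funext i
    simp [Matrix.mulVec, dotProduct, Fin.sum_univ_three, h21]
  have hRcol : ∀ j : Fin 3, R 0 j ^ 2 + R 1 j ^ 2 + R 2 j ^ 2 = 1 := by
    intro j
    have h := congrFun (congrFun hR.1 j) j
    simp [Matrix.mul_apply, Fin.sum_univ_three, Matrix.one_apply, Matrix.transpose_apply] at h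
    linear_combination h
  have hN0 : enorm3 (colA Ξ 0) = U1 0 0 := by
    rw [enorm3]
    have e : ∑ i, (colA Ξ 0) i ^ 2 = U1 0 0 ^ 2 := by
      rw [ha0, Fin.sum_univ_three]
      simp [Matrix.mulVec, dotProduct, Fin.sum_univ_three]
      linear_combination (U1 0 0) ^ 2 * hRcol 0
    rw [e]
    exact Real.sqrt_sq h00.le
  have hcr : cross3 (colA Ξ 0) (colA Ξ 1) = R *ᵥ ![0, 0, U1 0 0 * U1 1 1] := by
    rw [ha0, ha1, cross3_mulVec hR]
    have ec : cross3 ![U1 0 0, 0, 0] ![U1 0 1, U1 1 1, 0] = ![0, 0, U1 0 0 * U1 1 1] := by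
      funext i; fin_cases i <;> simp [cross3]
    rw [ec]
  have hN2 : enorm3 (cross3 (colA Ξ 0) (colA Ξ 1)) = U1 0 0 * U1 1 1 := by
    rw [enorm3]
    have e : ∑ i, (cross3 (colA Ξ 0) (colA Ξ 1)) i ^ 2 = (U1 0 0 * U1 1 1) ^ 2 := by
      rw [hcr, Fin.sum_univ_three]
      simp [Matrix.mulVec, dotProduct, Fin.sum_univ_three]
      linear_combination (U1 0 0 * U1 1 1) ^ 2 * hRcol 2
    rw [e]
    exact Real.sqrt_sq (by positivity)
  have hr0 : (enorm3 (colA Ξ 0))⁻¹ • colA Ξ 0 = fun i => R i 0 := by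
    funext i
    rw [hN0]
    simp [ha0, Matrix.mulVec, dotProduct, Fin.sum_univ_three]
    field_simp
  have hr2 : (enorm3 (cross3 (colA Ξ 0) (colA Ξ 1)))⁻¹ • cross3 (colA Ξ 0) (colA Ξ 1) =
      fun i => R i 2 := by
    funext i
    rw [hN2]
    simp [hcr, Matrix.mulVec, dotProduct, Fin.sum_univ_three]
    field_simp
  have hgR : gR Ξ = R := by
    ext i j
    fin_cases j
    · exact congrFun hr0 i
    · show cross3 ((enorm3 (cross3 (colA Ξ 0) (colA Ξ 1)))⁻¹ • cross3 (colA Ξ 0) (colA Ξ 1))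
        ((enorm3 (colA Ξ 0))⁻¹ • colA Ξ 0) i = R i 1
      rw [hr0, hr2]
      have e2 : (fun i => R i 2) = R *ᵥ ![0, 0, 1] := by
        funext k; simp [Matrix.mulVec, dotProduct, Fin.sum_univ_three]
      have e0 : (fun i => R i 0) = R *ᵥ ![1, 0, 0] := by
        funext k; simp [Matrix.mulVec, dotProduct, Fin.sum_univ_three]
      rw [e0, e2, cross3_mulVec hR]
      have ecr : cross3 ![(0:ℝ), 0, 1] ![1, 0, 0] = ![0, 1, 0] := by
        funext k; fin_cases k <;> simp [cross3]
      rw [ecr]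
      simp [Matrix.mulVec, dotProduct, Fin.sum_univ_three]
    · exact congrFun hr2 i
  have hgA : gA Ξ = R * U1 := gA_eq
  have hgU1 : gU1 Ξ = U1 := by
    rw [gU1, hgR, hgA, ← Matrix.mul_assoc, hR.1, Matrix.one_mul]
  have hgB : gB Ξ = skew3 p * R * U1 + R * U2 := gB_eq
  have hgM : gM Ξ = skew3 (Rᵀ *ᵥ p) * U1 + U2 := by
    rw [gM, hgR, hgB, Matrix.mul_add]
    have e1 : Rᵀ * (skew3 p * R * U1) = skew3 (Rᵀ *ᵥ p) * U1 := by
      simp only [← Matrix.mul_assoc]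
      rw [← skew_conj hR.transpose p, Matrix.mul_assoc (skew3 (Rᵀ *ᵥ p)) Rᵀ R, hR.1,
        Matrix.mul_one]
    have e2 : Rᵀ * (R * U2) = U2 := by
      rw [← Matrix.mul_assoc, hR.1, Matrix.one_mul]
    rw [e1, e2]
  have m10 : gM Ξ 1 0 = (Rᵀ *ᵥ p) 2 * U1 0 0 := by
    rw [hgM]
    simp [Matrix.add_apply, Matrix.mul_apply, skew3, Matrix.vecMul, dotProduct, Fin.sum_univ_three, h10, h20, k10]
  have m20 : gM Ξ 2 0 = -((Rᵀ *ᵥ p) 1 * U1 0 0) := by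
    rw [hgM]
    simp [Matrix.add_apply, Matrix.mul_apply, skew3, Matrix.vecMul, dotProduct, Fin.sum_univ_three, h10, h20, k20]
  have m21 : gM Ξ 2 1 = -((Rᵀ *ᵥ p) 1 * U1 0 1) + (Rᵀ *ᵥ p) 0 * U1 1 1 := by
    rw [hgM]
    simp [Matrix.add_apply, Matrix.mul_apply, skew3, Matrix.vecMul, dotProduct, Fin.sum_univ_three, h21, k21]
    try ring
  have hq0 : gq Ξ = Rᵀ *ᵥ p := by
    funext i
    fin_cases i
    · show (gM Ξ 2 1 + (- gM Ξ 2 0 / gU1 Ξ 0 0) * gU1 Ξ 0 1) / gU1 Ξ 1 1 = (Rᵀ *ᵥ p) 0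
      rw [m20, m21, hgU1]
      field_simp
      try ring
    · show - gM Ξ 2 0 / gU1 Ξ 0 0 = (Rᵀ *ᵥ p) 1
      rw [m20, hgU1]
      field_simp
    · show gM Ξ 1 0 / gU1 Ξ 0 0 = (Rᵀ *ᵥ p) 2
      rw [m10, hgU1]
      field_simp
  have hgp : gp Ξ = p := by
    rw [gp, hq0, hgR, Matrix.mulVec_mulVec, hR.mulT, Matrix.one_mulVec]
  have hgU2 : gU2 Ξ = U2 := by
    rw [gU2, hq0, hgU1, hgM, add_sub_cancel_left]
  show ((gR Ξ, gp Ξ), (gU1 Ξ, gU2 Ξ)) = ((R, p), (U1, U2))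
  rw [hgR, hgp, hgU1, hgU2]
theorem stmt19 :
    Set.BijOn SUmap
      {x | SO3 x.1.1 ∧ UT3 x.2.1 ∧ UT3 x.2.2 ∧ 0 < x.2.1 0 0 ∧ 0 < x.2.1 1 1}
      {Ξ : Matrix (Fin 3 ⊕ Fin 3) (Fin 3) ℝ |
        (fun i => Ξ (Sum.inl i) 0) ≠ 0 ∧
        cross3 (fun i => Ξ (Sum.inl i) 0) (fun i => Ξ (Sum.inl i) 1) ≠ 0} := by
  apply Set.InvOn.bijOn (f' := ginv)
  · constructor
    · intro x hx
      exact ginv_SUmap hx.1 hx.2.1 hx.2.2.1 hx.2.2.2.1 hx.2.2.2.2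
    · intro Ξ hΞ
      exact SUmap_ginv hΞ.1 hΞ.2
  · intro x hx
    exact SUmap_mapsTo hx.1 hx.2.1 hx.2.2.2.1 hx.2.2.2.2
  · intro Ξ hΞ
    exact ⟨gR_SO3 hΞ.1 hΞ.2, gU1_UT3, gU2_UT3 hΞ.1 hΞ.2, gU1_00_pos hΞ.1,
      gU1_11_pos hΞ.1 hΞ.2⟩
end
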